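/- arXiv:math/0703875 — 4 statements merged into one kernel-verified Lean document; each statement's English description precedes it below -/
import Mathlib

section
/- For each $\delta>0$ there exists $\rho=\rho(\delta)\in(0,\infty)$ such that for all $n\geq 1$, $\mathbf{P}\{\#K_\delta\geq n\}\leq \mathbf{P}\{1+\mathrm{Poisson}(\rho)\geq n\}$, i.e. the number of blocks of the Kingman coalescent at any fixed positive time, started from infinitely many blocks, is stochastically dominated by one plus a Poisson random variable. -/
open MeasureTheory ProbabilityTheory Real Set Filter
open scoped NNReal ENNReal

section KingmanAux

lemma aux_one_div_one_sub_le_exp {x : ℝ} (h0 : 0 ≤ x) (h1 : x ≤ 2/3) :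
    1 / (1 - x) ≤ Real.exp (3 * x) := by
  have hx : 0 < 1 - x := by linarith
  have h2 := Real.add_one_le_exp (3 * x)
  rw [div_le_iff₀ hx]
  nlinarith [Real.exp_pos (3*x)]

lemma aux_log_le {a x : ℝ} (ha : 0 < a) (hx : 0 < x) :
    Real.log x ≤ a * x + Real.log (1/a) := by
  have h1 : Real.log (a * x) ≤ a * x - 1 := Real.log_le_sub_one_of_pos (by positivity)
  rw [Real.log_mul (ne_of_gt ha) (ne_of_gt hx)] at h1
  have h2 : Real.log (1/a) = - Real.log a := by rw [one_div, Real.log_inv]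
  linarith

lemma aux_prod_one_sub_ge (s : Finset ℕ) (x : ℕ → ℝ) (h0 : ∀ i ∈ s, 0 ≤ x i)
    (h1 : ∀ i ∈ s, x i ≤ 1) : 1 - ∑ i ∈ s, x i ≤ ∏ i ∈ s, (1 - x i) := by
  classical
  induction s using Finset.cons_induction with
  | empty => simp
  | cons a s ha ih =>
    rw [Finset.prod_cons, Finset.sum_cons]
    have hxa0 := h0 a (Finset.mem_cons_self a s)
    have hxa1 := h1 a (Finset.mem_cons_self a s)
    have ih' := ih (fun i hi => h0 i (Finset.mem_cons_of_mem hi))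
      (fun i hi => h1 i (Finset.mem_cons_of_mem hi))
    have hs0 : 0 ≤ ∑ i ∈ s, x i := Finset.sum_nonneg (fun i hi => h0 i (Finset.mem_cons_of_mem hi))
    nlinarith

lemma aux_quartic_le_exp {x : ℝ} (hx : 0 ≤ x) : x^4 / 256 ≤ Real.exp x := by
  have h1 : x / 4 ≤ Real.exp (x/4) := by
    have := Real.add_one_le_exp (x/4); linarith
  have h2 : (x/4)^4 ≤ (Real.exp (x/4))^4 := pow_le_pow_left₀ (by positivity) h1 4
  have h3 : (Real.exp (x/4))^4 = Real.exp x := by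
    rw [← Real.exp_nat_mul]; push_cast; ring_nf
  calc x^4/256 = (x/4)^4 := by ring
  _ ≤ _ := by rw [h3] at h2; exact h2

lemma aux_exp_three : Real.exp 3 ≤ 20.5 := by
  have h := Real.exp_one_lt_d9
  have h3 : Real.exp 3 = (Real.exp 1)^3 := by
    rw [← Real.exp_nat_mul]; norm_num
  have h2 : (Real.exp 1)^3 < 2.7182818286^3 :=
    pow_lt_pow_left₀ h (le_of_lt (Real.exp_pos 1)) (by norm_num)
  rw [h3]; nlinarith


lemma aux_expMeasure_Iio_zero {r : ℝ} : expMeasure r (Iio 0) = 0 := by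
  have : expMeasure r = volume.withDensity (gammaPDF 1 r) := rfl
  rw [this, withDensity_apply _ measurableSet_Iio]
  exact lintegral_gammaPDF_of_nonpos le_rfl

lemma aux_expMeasure_Iic {r x : ℝ} (hr : 0 < r) (hx : 0 ≤ x) :
    expMeasure r (Iic x) = ENNReal.ofReal (1 - Real.exp (-(r * x))) := by
  have hprob : IsProbabilityMeasure (expMeasure r) := isProbabilityMeasure_expMeasure hr
  have h1 : cdf (expMeasure r) x = (expMeasure r (Iic x)).toReal := cdf_eq_real _ x
  have h3 := cdf_expMeasure_eq hr x
  rw [if_pos hx] at h3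
  have hne : expMeasure r (Iic x) ≠ ⊤ := measure_ne_top _ _
  rw [← ENNReal.ofReal_toReal hne, ← h1, h3]

lemma aux_exp_integral {b : ℝ} (hb : 0 < b) :
    ∫ x in Ioi (0:ℝ), Real.exp (-b * x) = 1 / b := by
  have h := integral_exp_neg_mul_rpow zero_lt_one hb
  simp_rw [Real.rpow_one] at h
  rw [h]
  norm_num [Real.rpow_neg_one, Real.Gamma_two]

-- MGF lintegral for the exponential distribution
lemma aux_exp_lintegral {r t : ℝ} (hr : 0 < r) (htr : t < r) :
    (∫⁻ x, ENNReal.ofReal (Real.exp (t * x)) ∂(expMeasure r)) = ENNReal.ofReal (r / (r - t)) := by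
  have hb : 0 < r - t := by linarith
  have hmeasg : Measurable (fun x : ℝ => ENNReal.ofReal (Real.exp (t * x))) := by
    exact (measurable_const.mul measurable_id).exp.ennreal_ofReal
  have hmeasf : Measurable (gammaPDF 1 r) :=
    (measurable_gammaPDFReal 1 r).ennreal_ofReal
  have hwd : expMeasure r = volume.withDensity (gammaPDF 1 r) := rfl
  rw [hwd, lintegral_withDensity_eq_lintegral_mul _ hmeasf hmeasg]
  have hint : (fun x => (gammaPDF 1 r * fun x => ENNReal.ofReal (rexp (t * x))) x)
      = fun x => ENNReal.ofReal (Set.indicator (Ici 0) (fun x => r * rexp (-(r - t) * x)) x) := by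
    funext x
    have hgp : gammaPDF 1 r x = exponentialPDF r x := rfl
    simp only [Pi.mul_apply, hgp, exponentialPDF_eq, Set.indicator_apply]
    by_cases hx : 0 ≤ x
    · rw [if_pos hx, if_pos (mem_Ici.mpr hx), ← ENNReal.ofReal_mul (by positivity)]
      congr 1
      rw [mul_assoc, ← Real.exp_add]
      ring_nf
    · rw [if_neg hx, if_neg (fun h => hx (mem_Ici.mp h))]
      simp
  rw [hint]
  have hIntOn : IntegrableOn (fun x => r * rexp (-(r - t) * x)) (Ici 0) volume := by
    rw [integrableOn_Ici_iff_integrableOn_Ioi]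
    exact (exp_neg_integrableOn_Ioi 0 hb).const_mul r
  have hInt : Integrable (Set.indicator (Ici 0) (fun x => r * rexp (-(r - t) * x))) volume := by
    rwa [integrable_indicator_iff measurableSet_Ici]
  rw [← ofReal_integral_eq_lintegral_ofReal hInt]
  · congr 1
    rw [integral_indicator measurableSet_Ici, integral_Ici_eq_integral_Ioi,
      integral_const_mul, aux_exp_integral hb]
    field_simp
  · filter_upwards with x
    exact Set.indicator_nonneg (fun y _ => by positivity) x

lemma aux_mgf {Ω : Type*} [MeasurableSpace Ω] (μ : Measure Ω) {X : Ω → ℝ}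
    (hX : Measurable X) {r t : ℝ} (hr : 0 < r) (htr : t < r)
    (hlaw : μ.map X = expMeasure r) :
    Integrable (fun ω => Real.exp (t * X ω)) μ ∧ mgf X μ t = r / (r - t) := by
  have hmeasg : Measurable (fun x : ℝ => ENNReal.ofReal (Real.exp (t * x))) :=
    (measurable_const.mul measurable_id).exp.ennreal_ofReal
  have hA : (∫⁻ ω, ENNReal.ofReal (Real.exp (t * X ω)) ∂μ) = ENNReal.ofReal (r / (r - t)) := by
    rw [← lintegral_map hmeasg hX, hlaw]
    exact aux_exp_lintegral hr htr
  have hnn : 0 ≤ᵐ[μ] fun ω => Real.exp (t * X ω) :=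
    Filter.Eventually.of_forall (fun ω => (Real.exp_pos _).le)
  have hsm : AEStronglyMeasurable (fun ω => Real.exp (t * X ω)) μ :=
    ((measurable_const.mul hX).exp).aestronglyMeasurable
  have hInt : Integrable (fun ω => Real.exp (t * X ω)) μ := by
    refine ⟨hsm, ?_⟩
    rw [hasFiniteIntegral_iff_ofReal hnn, hA]
    exact ENNReal.ofReal_lt_top
  refine ⟨hInt, ?_⟩
  have : mgf X μ t = ∫ ω, Real.exp (t * X ω) ∂μ := rfl
  rw [this, integral_eq_lintegral_of_nonneg_ae hnn hsm, hA,
    ENNReal.toReal_ofReal (le_of_lt (div_pos hr (by linarith)))]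

lemma aux_sum_inv (m N : ℕ) (hm : 1 ≤ m) :
    ∑ i ∈ Finset.Ico m (m+N), (1 / ((i:ℝ) * ((i:ℝ)+1) / 2)) ≤ 2 / (m:ℝ) := by
  have hmpos : (0:ℝ) < m := by exact_mod_cast hm
  rw [Finset.sum_Ico_eq_sum_range, add_tsub_cancel_left]
  set f : ℕ → ℝ := fun j => 2 / ((m:ℝ) + (j:ℝ)) with hf
  have hcongr : ∑ k ∈ Finset.range N, (1 / (((m+k:ℕ):ℝ) * (((m+k:ℕ):ℝ)+1) / 2))
      = ∑ k ∈ Finset.range N, (f k - f (k+1)) := by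
    refine Finset.sum_congr rfl (fun k _ => ?_)
    have h1 : (0:ℝ) < (m:ℝ) + (k:ℝ) := by positivity
    have h2 : (0:ℝ) < (m:ℝ) + (k:ℝ) + 1 := by positivity
    rw [hf]
    push_cast
    field_simp
    ring
  rw [hcongr, Finset.sum_range_sub']
  have h3 : (0:ℝ) ≤ f N := by rw [hf]; positivity
  have h4 : f 0 = 2 / (m:ℝ) := by rw [hf]; norm_num
  linarith

lemma aux_chernoff {Ω : Type*} [MeasurableSpace Ω] (μ : Measure Ω) [IsProbabilityMeasure μ]
    (Υ : ℕ → Ω → ℝ) (hmeas : ∀ n, Measurable (Υ n))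
    (hindep : iIndepFun Υ μ)
    (hlaw : ∀ n : ℕ, 1 ≤ n → Measure.map (Υ n) μ = expMeasure ((n : ℝ) * (n + 1) / 2))
    (δ : ℝ) (m N : ℕ) (hm : 1 ≤ m) :
    (μ {ω | δ ≤ ∑ k ∈ Finset.range N, Υ (m+k) ω}).toReal
      ≤ Real.exp (3*((m:ℝ)+1)/2) * Real.exp (-((m:ℝ)*((m:ℝ)+1)/4) * δ) := by
  classical
  set θ : ℝ := (m:ℝ)*((m:ℝ)+1)/4 with hθdef
  have hmpos : (0:ℝ) < m := by exact_mod_cast hm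
  have hθpos : 0 < θ := by positivity
  set s : Finset ℕ := Finset.Ico m (m+N) with hsdef
  have hkey : ∀ i ∈ s, 0 < (i:ℝ) * ((i:ℝ)+1) / 2 ∧ θ ≤ (i:ℝ) * ((i:ℝ)+1) / 4 ∧ 1 ≤ i := by
    intro i hi
    have h1 : m ≤ i := (Finset.mem_Ico.mp hi).1
    have h1' : (m:ℝ) ≤ i := by exact_mod_cast h1
    have h2 : 1 ≤ i := le_trans hm h1
    have hipos : (0:ℝ) < i := by exact_mod_cast h2
    refine ⟨by positivity, ?_, h2⟩
    rw [hθdef]; nlinarith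
  have h_int : ∀ i ∈ s, Integrable (fun ω => Real.exp (θ * Υ i ω)) μ := by
    intro i hi
    obtain ⟨hpos, hle, h1⟩ := hkey i hi
    exact (aux_mgf μ (hmeas i) hpos (by nlinarith) (hlaw i h1)).1
  have hset : {ω | δ ≤ ∑ k ∈ Finset.range N, Υ (m+k) ω}
      = {ω | δ ≤ (∑ i ∈ s, Υ i) ω} := by
    ext ω
    simp only [Set.mem_setOf_eq, Finset.sum_apply, hsdef]
    rw [Finset.sum_Ico_eq_sum_range, add_tsub_cancel_left]
  rw [hset]
  have hchern := measure_ge_le_exp_mul_mgf (μ := μ) (X := ∑ i ∈ s, Υ i) δ hθpos.le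
    (hindep.integrable_exp_mul_sum hmeas h_int)
  refine le_trans hchern ?_
  have hstep1 : (∏ i ∈ s, mgf (Υ i) μ θ)
      ≤ ∏ i ∈ s, Real.exp (3 * (θ / ((i:ℝ) * ((i:ℝ)+1) / 2))) := by
    refine Finset.prod_le_prod (fun i _ => mgf_nonneg) ?_
    intro i hi
    obtain ⟨hpos, hle, h1⟩ := hkey i hi
    have hlt : θ < (i:ℝ) * ((i:ℝ)+1) / 2 := by nlinarith
    have hmgf := (aux_mgf (t := θ) μ (hmeas i) hpos hlt (hlaw i h1)).2
    rw [hmgf]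
    have hx0 : 0 ≤ θ / ((i:ℝ) * ((i:ℝ)+1) / 2) := by positivity
    have hx1 : θ / ((i:ℝ) * ((i:ℝ)+1) / 2) ≤ 2/3 := by
      rw [div_le_iff₀ hpos]; nlinarith
    have heq : (i:ℝ) * ((i:ℝ)+1) / 2 / ((i:ℝ) * ((i:ℝ)+1) / 2 - θ)
        = 1 / (1 - θ / ((i:ℝ) * ((i:ℝ)+1) / 2)) := by
      rw [one_sub_div hpos.ne', one_div_div]
    rw [heq]
    exact aux_one_div_one_sub_le_exp hx0 hx1
  have hstep2 : (∏ i ∈ s, Real.exp (3 * (θ / ((i:ℝ) * ((i:ℝ)+1) / 2))))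
      ≤ Real.exp (3*((m:ℝ)+1)/2) := by
    rw [← Real.exp_sum]
    apply Real.exp_le_exp.mpr
    have heq2 : ∑ i ∈ s, 3 * (θ / ((i:ℝ) * ((i:ℝ)+1) / 2))
        = 3 * θ * ∑ i ∈ s, (1 / ((i:ℝ) * ((i:ℝ)+1) / 2)) := by
      rw [Finset.mul_sum]
      refine Finset.sum_congr rfl (fun i _ => ?_)
      ring
    rw [heq2]
    have hsum := aux_sum_inv m N hm
    have h5 : 3 * θ * ∑ i ∈ s, (1 / ((i:ℝ) * ((i:ℝ)+1) / 2)) ≤ 3 * θ * (2 / (m:ℝ)) :=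
      mul_le_mul_of_nonneg_left hsum (by positivity)
    have h6 : 3 * θ * (2 / (m:ℝ)) = 3*((m:ℝ)+1)/2 := by
      rw [hθdef]; field_simp; ring
    linarith
  have hprod := le_trans hstep1 hstep2
  calc Real.exp (-θ * δ) * mgf (∑ i ∈ s, Υ i) μ θ
      = Real.exp (-θ * δ) * ∏ i ∈ s, mgf (Υ i) μ θ := by rw [hindep.mgf_sum hmeas s]
    _ ≤ Real.exp (-θ * δ) * Real.exp (3*((m:ℝ)+1)/2) :=
        mul_le_mul_of_nonneg_left hprod (Real.exp_pos _).le
    _ = Real.exp (3*((m:ℝ)+1)/2) * Real.exp (-((m:ℝ)*((m:ℝ)+1)/4) * δ) := by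
        rw [mul_comm, hθdef]

lemma aux_lower {Ω : Type*} [MeasurableSpace Ω] (μ : Measure Ω) [IsProbabilityMeasure μ]
    (Υ : ℕ → Ω → ℝ) (hmeas : ∀ n, Measurable (Υ n))
    (hindep : iIndepFun Υ μ)
    (hlaw : ∀ n : ℕ, 1 ≤ n → Measure.map (Υ n) μ = expMeasure ((n : ℝ) * (n + 1) / 2))
    (δ : ℝ) (hδ : 0 < δ) :
    ∃ c0 : ℝ, 0 < c0 ∧ c0 ≤ 1 ∧ ∀ N : ℕ,
      μ {ω | δ ≤ ∑ k ∈ Finset.range N, Υ (1+k) ω} ≤ 1 - ENNReal.ofReal c0 := by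
  classical
  set L : ℕ → ℝ := fun i => (i:ℝ) * ((i:ℝ)+1) / 2 with hL
  set b : ℕ → ℝ := fun k => (δ/2) * (1/Real.sqrt ((k:ℝ)+1) - 1/Real.sqrt ((k:ℝ)+2)) with hb
  have hsq : ∀ k : ℕ, 0 < Real.sqrt ((k:ℝ)+1) ∧ Real.sqrt ((k:ℝ)+1) < Real.sqrt ((k:ℝ)+2) := by
    intro k
    constructor
    · exact Real.sqrt_pos.mpr (by positivity)
    · exact Real.sqrt_lt_sqrt (by positivity) (by linarith)
  have hbpos : ∀ k, 0 < b k := by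
    intro k
    obtain ⟨h1, h2⟩ := hsq k
    have : 1/Real.sqrt ((k:ℝ)+2) < 1/Real.sqrt ((k:ℝ)+1) := by
      apply one_div_lt_one_div_of_lt h1 h2
    rw [hb]
    have : 0 < 1/Real.sqrt ((k:ℝ)+1) - 1/Real.sqrt ((k:ℝ)+2) := by linarith
    positivity
  have hbsum : ∀ N, ∑ k ∈ Finset.range N, b k ≤ δ/2 := by
    intro N
    set f : ℕ → ℝ := fun j => 1/Real.sqrt ((j:ℝ)+1) with hf
    have hcongr : ∀ k ∈ Finset.range N, b k = (δ/2) * (f k - f (k+1)) := by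
      intro k _
      simp only [hb, hf]
      push_cast
      rw [show (k:ℝ)+1+1 = (k:ℝ)+2 from by ring]
    rw [Finset.sum_congr rfl hcongr, ← Finset.mul_sum, Finset.sum_range_sub']
    have h0 : f 0 = 1 := by rw [hf]; norm_num
    have h1 : 0 ≤ f N := by rw [hf]; positivity
    nlinarith
  set q : ℕ → ℝ := fun k => Real.exp (-(L (1+k) * b k)) with hq
  have hLpos : ∀ k : ℕ, 0 < L (1+k) := by
    intro k; rw [hL]; push_cast; positivity
  have hqpos : ∀ k, 0 < q k := fun k => Real.exp_pos _
  have hqlt1 : ∀ k, q k < 1 := by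
    intro k
    rw [hq]
    apply Real.exp_lt_one_iff.mpr
    have := mul_pos (hLpos k) (hbpos k)
    linarith
  -- key estimate : q k ≤ exp(-(δ/8) * sqrt (k+1))
  have hqle : ∀ k, q k ≤ Real.exp (-(δ/8 * Real.sqrt ((k:ℝ)+1))) := by
    intro k
    rw [hq]
    apply Real.exp_le_exp.mpr
    rw [neg_le_neg_iff]
    set u := Real.sqrt ((k:ℝ)+1) with hu
    set v := Real.sqrt ((k:ℝ)+2) with hv
    obtain ⟨hup, huv⟩ := hsq k
    have hvp : 0 < v := lt_trans hup huv
    have hu2 : u^2 = (k:ℝ)+1 := Real.sq_sqrt (by positivity)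
    have hv2 : v^2 = (k:ℝ)+2 := Real.sq_sqrt (by positivity)
    have hL1 : L (1+k) = ((k:ℝ)+1) * ((k:ℝ)+2) / 2 := by
      rw [hL]; push_cast; ring
    have hb1 : b k = (δ/2) * ((v - u)/(u*v)) := by
      rw [hb, hu, hv]
      congr 1
      field_simp
    rw [hL1, hb1, ← hu2, ← hv2]
    -- goal: δ/8 * u ≤ u^2*v^2/2 * ((δ/2) * ((v-u)/(u*v)))
    have hkey : u^2*v^2/2 * ((δ/2) * ((v - u)/(u*v))) = (δ/4) * (u*v*(v-u)) := by
      field_simp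
      ring
    rw [hkey]
    have hdiff : (v - u) * (v + u) = 1 := by nlinarith
    have h3 : u * (v + u) ≤ 2 * (u * v) := by nlinarith
    have h4 : 2 * (u*v*(v-u)) * (v+u) = 2*(u*v) := by
      calc 2 * (u*v*(v-u)) * (v+u) = 2*(u*v) * ((v-u)*(v+u)) := by ring
        _ = 2*(u*v) := by rw [hdiff]; ring
    have h5 : u * (v+u) ≤ 2 * (u*v*(v-u)) * (v+u) := by rw [h4]; exact h3
    have h6 : u ≤ 2 * (u*v*(v-u)) := le_of_mul_le_mul_right h5 (by positivity)
    have h7 := mul_le_mul_of_nonneg_left h6 (le_of_lt (show (0:ℝ) < δ/8 by positivity))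
    linarith
  have hqsummable : Summable q := by
    have hmaj : ∀ k : ℕ, q k ≤ (256 / (δ/8)^4) * (1/((k:ℝ)+1)^2) := by
      intro k
      refine le_trans (hqle k) ?_
      set x := δ/8 * Real.sqrt ((k:ℝ)+1) with hx
      have hx0 : 0 ≤ x := by positivity
      have h1 := aux_quartic_le_exp hx0
      have hsqk : (Real.sqrt ((k:ℝ)+1))^2 = (k:ℝ)+1 := Real.sq_sqrt (by positivity)
      have h3 : x^4 = (δ/8)^4 * ((k:ℝ)+1)^2 := by
        have h4 : (Real.sqrt ((k:ℝ)+1))^4 = ((k:ℝ)+1)^2 := by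
          rw [show 4 = 2*2 from rfl, pow_mul, hsqk]
        rw [hx, mul_pow, h4]
      have h5 : (δ/8)^4 * ((k:ℝ)+1)^2 / 256 ≤ Real.exp x := by rw [← h3]; exact h1
      have h6 : (0:ℝ) < (δ/8)^4 * ((k:ℝ)+1)^2 / 256 := by positivity
      have h7 : Real.exp (-x) = 1 / Real.exp x := by rw [Real.exp_neg, one_div]
      rw [h7]
      calc 1 / Real.exp x ≤ 1 / ((δ/8)^4 * ((k:ℝ)+1)^2 / 256) :=
            one_div_le_one_div_of_le h6 h5
        _ = (256 / (δ/8)^4) * (1/((k:ℝ)+1)^2) := by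
            field_simp
    have hs2 : Summable (fun n : ℕ => 1/((n:ℝ))^2) := summable_one_div_nat_pow.mpr one_lt_two
    have hs3 : Summable (fun k : ℕ => 1/((k:ℝ)+1)^2) := by
      have := (summable_nat_add_iff (f := fun n : ℕ => 1/((n:ℝ))^2) 1).mpr hs2
      refine this.congr (fun k => ?_)
      push_cast
      ring
    exact Summable.of_nonneg_of_le (fun k => (hqpos k).le) hmaj (hs3.mul_left _)
  -- choose K with tail sum at most 1/2
  have htail := tendsto_sum_nat_add q
  have hev : ∀ᶠ K in atTop, ∑' k, q (k + K) ≤ 1/2 := by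
    have := htail.eventually (eventually_le_nhds (show (0:ℝ) < 1/2 by norm_num))
    exact this
  obtain ⟨K, hK⟩ := hev.exists
  refine ⟨(∏ k ∈ Finset.range K, (1 - q k)) * (1/2), ?_, ?_, ?_⟩
  · have : ∀ k ∈ Finset.range K, 0 < 1 - q k := fun k _ => by linarith [hqlt1 k]
    have := Finset.prod_pos this
    positivity
  · have h1 : ∀ k ∈ Finset.range K, 1 - q k ≤ 1 := fun k _ => by linarith [hqpos k]
    have h0 : ∀ k ∈ Finset.range K, 0 ≤ 1 - q k := fun k _ => by linarith [hqlt1 k]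
    have := Finset.prod_le_one h0 h1
    nlinarith [Finset.prod_nonneg h0]
  intro N
  -- the product lower bound, uniform in N
  have hprodlb : ∀ M : ℕ, (∏ k ∈ Finset.range K, (1 - q k)) * (1/2)
      ≤ ∏ k ∈ Finset.range M, (1 - q k) := by
    intro M
    have h0 : ∀ k, (0:ℝ) ≤ 1 - q k := fun k => by linarith [hqlt1 k]
    have h1 : ∀ k, 1 - q k ≤ 1 := fun k => by linarith [hqpos k]
    rcases le_total M K with hMK | hKM
    · have hsplit : (∏ k ∈ Finset.range M, (1 - q k)) * ∏ k ∈ Finset.Ico M K, (1 - q k)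
          = ∏ k ∈ Finset.range K, (1 - q k) := Finset.prod_range_mul_prod_Ico _ hMK
      have hle1 : ∏ k ∈ Finset.Ico M K, (1 - q k) ≤ 1 :=
        Finset.prod_le_one (fun k _ => h0 k) (fun k _ => h1 k)
      have hge0 : (0:ℝ) ≤ ∏ k ∈ Finset.range M, (1 - q k) :=
        Finset.prod_nonneg (fun k _ => h0 k)
      nlinarith [Finset.prod_nonneg (fun k (_ : k ∈ Finset.Ico M K) => h0 k)]
    · have hsplit : (∏ k ∈ Finset.range K, (1 - q k)) * ∏ k ∈ Finset.Ico K M, (1 - q k)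
          = ∏ k ∈ Finset.range M, (1 - q k) := Finset.prod_range_mul_prod_Ico _ hKM
      have hsumle : ∑ k ∈ Finset.Ico K M, q k ≤ 1/2 := by
        have heq : ∑ k ∈ Finset.Ico K M, q k = ∑ j ∈ Finset.range (M - K), q (K + j) := by
          rw [Finset.sum_Ico_eq_sum_range]
        rw [heq]
        have hsum2 : Summable (fun j : ℕ => q (j + K)) := (summable_nat_add_iff K).mpr hqsummable
        have hle := hsum2.sum_le_tsum (Finset.range (M - K)) (fun j _ => (hqpos (j + K)).le)
        refine le_trans (le_of_eq ?_) (le_trans hle hK)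
        refine Finset.sum_congr rfl (fun j _ => ?_)
        rw [Nat.add_comm]
      have hwei : 1 - ∑ k ∈ Finset.Ico K M, q k ≤ ∏ k ∈ Finset.Ico K M, (1 - q k) :=
        aux_prod_one_sub_ge _ _ (fun k _ => (hqpos k).le) (fun k _ => (hqlt1 k).le)
      have hIco : (1:ℝ)/2 ≤ ∏ k ∈ Finset.Ico K M, (1 - q k) := by linarith
      have hge0 : (0:ℝ) ≤ ∏ k ∈ Finset.range K, (1 - q k) :=
        Finset.prod_nonneg (fun k _ => h0 k)
      nlinarith
  -- independence: measure of the intersection is the product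
  set E : ℕ → Set Ω := fun i => Υ i ⁻¹' (Iic (b (i - 1))) with hE
  have hEmeas : ∀ i, MeasurableSet (E i) := fun i => (hmeas i) measurableSet_Iic
  have hmeasInter : μ (⋂ k ∈ Finset.range N, E (k+1))
      = ∏ k ∈ Finset.range N, μ (E (k+1)) := by
    have hiInter : (⋂ k ∈ Finset.range N, E (k+1)) = ⋂ i ∈ Finset.Ico 1 (N+1), E i := by
      ext ω
      simp only [Set.mem_iInter, Finset.mem_range, Finset.mem_Ico]
      constructor
      · intro h i hi
        have : i - 1 < N := by omega
        have := h (i-1) this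
        rwa [show i - 1 + 1 = i from by omega] at this
      · intro h k hk
        exact h (k+1) (by omega)
    rw [hiInter]
    rw [hindep.meas_biInter (fun i _ => ⟨Iic (b (i-1)), measurableSet_Iic, rfl⟩)]
    rw [Finset.prod_Ico_eq_prod_range]
    simp only [Nat.add_sub_cancel]
    refine Finset.prod_congr rfl (fun k _ => ?_)
    rw [Nat.add_comm 1 k]
  have hEval : ∀ k : ℕ, μ (E (k+1)) = ENNReal.ofReal (1 - q k) := by
    intro k
    rw [hE]
    have h1 : μ (Υ (k+1) ⁻¹' (Iic (b (k+1-1)))) = (μ.map (Υ (k+1))) (Iic (b (k+1-1))) :=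
      (Measure.map_apply (hmeas (k+1)) measurableSet_Iic).symm
    rw [h1, hlaw (k+1) (by omega)]
    simp only [Nat.add_sub_cancel]
    rw [aux_expMeasure_Iic (by positivity) (hbpos k).le]
    rw [hq]
    congr 3
    push_cast
    rw [hL]
    push_cast
    ring
  -- disjointness
  have hsub : {ω | δ ≤ ∑ k ∈ Finset.range N, Υ (1+k) ω}
      ⊆ (⋂ k ∈ Finset.range N, E (k+1))ᶜ := by
    intro ω hω
    simp only [Set.mem_compl_iff]
    intro hmem
    rw [Set.mem_iInter₂] at hmem
    have hsumle : ∑ k ∈ Finset.range N, Υ (1+k) ω ≤ ∑ k ∈ Finset.range N, b k := by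
      refine Finset.sum_le_sum (fun k hk => ?_)
      have := hmem k hk
      rw [hE] at this
      simp only [Set.mem_preimage, Set.mem_Iic, Nat.add_sub_cancel] at this
      rwa [Nat.add_comm 1 k]
    have := hbsum N
    have hδω := Set.mem_setOf_eq ▸ hω
    linarith
  have hmeasI : MeasurableSet (⋂ k ∈ Finset.range N, E (k+1)) :=
    MeasurableSet.biInter (Finset.range N).countable_toSet (fun k _ => hEmeas (k+1))
  calc μ {ω | δ ≤ ∑ k ∈ Finset.range N, Υ (1+k) ω}
      ≤ μ ((⋂ k ∈ Finset.range N, E (k+1))ᶜ) := measure_mono hsub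
    _ = 1 - μ (⋂ k ∈ Finset.range N, E (k+1)) := by
        rw [measure_compl hmeasI (measure_ne_top _ _), measure_univ]
    _ ≤ 1 - ENNReal.ofReal ((∏ k ∈ Finset.range K, (1 - q k)) * (1/2)) := by
        refine tsub_le_tsub_left ?_ 1
        rw [hmeasInter]
        have : ∏ k ∈ Finset.range N, μ (E (k+1))
            = ENNReal.ofReal (∏ k ∈ Finset.range N, (1 - q k)) := by
          rw [ENNReal.ofReal_prod_of_nonneg (fun k _ => by linarith [hqlt1 k])]
          exact Finset.prod_congr rfl (fun k _ => hEval k)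
        rw [this]
        exact ENNReal.ofReal_le_ofReal (hprodlb N)

lemma aux_pois_singleton (ρ : ℝ≥0) (m : ℕ) :
    poissonMeasure ρ {m} = ENNReal.ofReal (poissonPMFReal ρ m) := by
  rw [poissonMeasure_singleton]
  rfl

lemma aux_pois_tail_pmf (ρ : ℝ≥0) (m : ℕ) :
    ENNReal.ofReal (poissonPMFReal ρ m) ≤ poissonMeasure ρ {m' | m ≤ m'} := by
  rw [← aux_pois_singleton]
  exact measure_mono (by intro x hx; simp only [Set.mem_singleton_iff] at hx; simp [hx])

lemma aux_pois_tail_eq (ρ : ℝ≥0) (m : ℕ) :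
    poissonMeasure ρ {m' : ℕ | m ≤ m'}
      = 1 - ENNReal.ofReal (∑ j ∈ Finset.range m, poissonPMFReal ρ j) := by
  have hc : {m' : ℕ | m ≤ m'} = (↑(Finset.range m) : Set ℕ)ᶜ := by
    ext x; simp [Nat.lt_iff_add_one_le, not_lt]
  have : IsProbabilityMeasure (poissonMeasure ρ) := inferInstance
  rw [hc, measure_compl (Finset.range m).measurableSet (measure_ne_top _ _), measure_univ]
  congr 1
  rw [← sum_measure_singleton, ENNReal.ofReal_sum_of_nonneg (fun j _ => poissonPMFReal_nonneg)]
  exact Finset.sum_congr rfl (fun j _ => poissonMeasure_singleton ρ j)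

lemma aux_regimeB {δ R : ℝ} (hδ : 0 < δ) (hR : 164 / δ ≤ R) (m : ℕ) (hm : 1 ≤ m)
    (hreg : (8/δ)*(R+1) < (m:ℝ)^2) :
    Real.exp (3*((m:ℝ)+1)/2) * Real.exp (-((m:ℝ)*((m:ℝ)+1)/4) * δ)
      ≤ Real.exp (-R) * R^m / (Nat.factorial m) := by
  have hmR : (0:ℝ) < m := by exact_mod_cast hm
  have hRpos : 0 < R := lt_of_lt_of_le (by positivity) hR
  have hfactpos : (0:ℝ) < (Nat.factorial m : ℝ) := by exact_mod_cast Nat.factorial_pos m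
  have hRHS : Real.exp (-R + (m:ℝ) * Real.log R - Real.log (Nat.factorial m))
      = Real.exp (-R) * R^m / (Nat.factorial m) := by
    rw [Real.exp_sub, Real.exp_add, Real.exp_log hfactpos, Real.exp_nat_mul,
      Real.exp_log hRpos]
  rw [← Real.exp_add, ← hRHS]
  apply Real.exp_le_exp.mpr
  -- log of factorial
  have hfact : Real.log (Nat.factorial m) ≤ (m:ℝ) * Real.log m := by
    have h1 : (Nat.factorial m : ℝ) ≤ (m:ℝ)^m := by
      exact_mod_cast Nat.factorial_le_pow m
    calc Real.log (Nat.factorial m) ≤ Real.log ((m:ℝ)^m) :=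
          Real.log_le_log hfactpos h1
      _ = (m:ℝ) * Real.log m := by rw [Real.log_pow]
  have hlogm : Real.log m ≤ (δ/8) * m + Real.log (8/δ) := by
    have := aux_log_le (a := δ/8) (by positivity) hmR
    rwa [show 1/(δ/8) = 8/δ by field_simp] at this
  have hlogR : Real.log (8/δ) + 3 ≤ Real.log R := by
    have h1 : (8/δ) * 20.5 ≤ R := by
      calc (8/δ) * 20.5 = 164/δ := by ring
        _ ≤ R := hR
    have h2 : Real.log ((8/δ) * 20.5) ≤ Real.log R :=
      Real.log_le_log (by positivity) h1
    rw [Real.log_mul (by positivity) (by norm_num)] at h2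
    have h3 : (3:ℝ) ≤ Real.log 20.5 :=
      (Real.le_log_iff_exp_le (by norm_num)).mpr aux_exp_three
    linarith
  have hcast : (8/δ) * (R + 1) < (m:ℝ)^2 := hreg
  have hδ8 : 0 < δ/8 := by positivity
  have hkey : R + 1 < (δ/8) * (m:ℝ)^2 := by
    have h6 := mul_lt_mul_of_pos_left hcast hδ8
    have heq : (δ/8)*((8/δ)*(R+1)) = R+1 := by field_simp
    linarith [heq ▸ h6]
  have h4 : (m:ℝ) * Real.log m ≤ (m:ℝ) * ((δ/8) * m + Real.log (8/δ)) :=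
    mul_le_mul_of_nonneg_left hlogm (le_of_lt hmR)
  have h5 : (m:ℝ) * (Real.log (8/δ) + 3) ≤ (m:ℝ) * Real.log R :=
    mul_le_mul_of_nonneg_left hlogR (le_of_lt hmR)
  nlinarith [hfact, h4, h5, hkey, hmR]

lemma aux_regimeA {δ R c0 : ℝ} (hδ : 0 < δ) (hc0 : 0 < c0)
    (hR2 : 2 ≤ R) (hRδ : 12/δ ≤ R)
    (hRu : (8*Real.sqrt (12/δ))^4 ≤ R)
    (hRc0 : 2 * Real.log (1/c0) ≤ R)
    (m : ℕ) (hm : 1 ≤ m) (hreg : (m:ℝ)^2 ≤ (8/δ)*(R+1)) (ρ : ℝ≥0) (hρ : (ρ:ℝ) = R) :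
    ∑ j ∈ Finset.range m, poissonPMFReal ρ j ≤ c0 := by
  have hR0 : (0:ℝ) < R := by linarith
  have hR1 : (1:ℝ) ≤ R := by linarith
  have hm0 : (0:ℝ) < m := by exact_mod_cast hm
  -- m^2 ≤ 12 R / δ
  have hm2 : (m:ℝ)^2 ≤ 12*R/δ := by
    have h1 : (8/δ)*(R+1) ≤ (8/δ)*((3/2)*R) := by
      have : R + 1 ≤ (3/2)*R := by linarith
      exact mul_le_mul_of_nonneg_left this (by positivity)
    have h2 : (8/δ)*((3/2)*R) = 12*R/δ := by ring
    linarith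
  -- m ≤ R
  have hmR : (m:ℝ) ≤ R := by
    have h1 : 12*R/δ ≤ R^2 := by
      rw [div_le_iff₀ hδ]
      have h2 : (12/δ) * R ≤ R * R := mul_le_mul_of_nonneg_right hRδ hR0.le
      calc 12*R = (12/δ)*R*δ := by field_simp
        _ ≤ R*R*δ := by
            refine mul_le_mul_of_nonneg_right h2 hδ.le
        _ = R^2*δ := by ring
    have h3 : (m:ℝ)^2 ≤ R^2 := le_trans hm2 h1
    exact (pow_le_pow_iff_left₀ (by positivity) hR0.le (by norm_num)).mp h3
  -- m * log R ≤ R / 2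
  have hmlogR : (m:ℝ) * Real.log R ≤ R/2 := by
    set u := Real.sqrt (Real.sqrt R) with hudef
    have hsR : (0:ℝ) ≤ Real.sqrt R := Real.sqrt_nonneg R
    have hu0 : (0:ℝ) ≤ u := Real.sqrt_nonneg _
    have hu2 : u^2 = Real.sqrt R := Real.sq_sqrt hsR
    have hu4 : u^4 = R := by
      rw [show 4 = 2*2 from rfl, pow_mul, hu2]
      exact Real.sq_sqrt hR0.le
    have hup : 0 < u := by
      rcases lt_or_eq_of_le hu0 with h | h
      · exact h
      · exfalso; rw [← h] at hu4; simp at hu4; linarith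
    set s := Real.sqrt (12/δ) with hsdef
    have hs0 : 0 ≤ s := Real.sqrt_nonneg _
    have hs2 : s^2 = 12/δ := Real.sq_sqrt (by positivity)
    -- m ≤ s * u^2
    have hmu : (m:ℝ) ≤ s * u^2 := by
      have h1 : (m:ℝ)^2 ≤ (s*u^2)^2 := by
        have : (s*u^2)^2 = (12/δ) * R := by
          rw [mul_pow, hs2]
          rw [show (u^2)^2 = u^4 from by ring, hu4]
        rw [this]
        calc (m:ℝ)^2 ≤ 12*R/δ := hm2
          _ = (12/δ)*R := by ring
      exact (pow_le_pow_iff_left₀ (by positivity) (by positivity) (by norm_num)).mp h1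
    -- log R ≤ 4 u
    have hlogR4u : Real.log R ≤ 4*u := by
      have h1 : Real.log R = 4 * Real.log u := by
        rw [← hu4, Real.log_pow]
        norm_num
      have h2 : Real.log u ≤ u - 1 := Real.log_le_sub_one_of_pos hup
      linarith
    -- 8 s ≤ u
    have h8s : 8*s ≤ u := by
      have h1 : (8*s)^4 ≤ u^4 := by rw [hu4]; exact hRu
      exact (pow_le_pow_iff_left₀ (by positivity) hu0 (by norm_num)).mp h1
    have hlogR0 : 0 ≤ Real.log R := Real.log_nonneg hR1
    have h7 : (m:ℝ) * Real.log R ≤ (s*u^2) * (4*u) :=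
      mul_le_mul hmu hlogR4u hlogR0 (by positivity)
    have h8 : (s*u^2)*(4*u) = (u^3/2) * (8*s) := by ring
    have h9 : (u^3/2) * (8*s) ≤ (u^3/2) * u :=
      mul_le_mul_of_nonneg_left h8s (by positivity)
    have h10 : (u^3/2) * u = R/2 := by
      rw [show u^3/2*u = u^4/2 from by ring, hu4]
    linarith
  -- conclusion
  have hbound : ∀ j ∈ Finset.range m, poissonPMFReal ρ j ≤ Real.exp (-R) * R^(m-1) := by
    intro j hj
    rw [poissonPMFReal, hρ]
    have hfact1 : (1:ℝ) ≤ (Nat.factorial j : ℝ) := by exact_mod_cast (Nat.factorial_pos j)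
    have hj' : j < m := Finset.mem_range.mp hj
    have hpow : R^j ≤ R^(m-1) :=
      pow_le_pow_right₀ hR1 (by omega)
    calc Real.exp (-R) * R^j / (Nat.factorial j) ≤ Real.exp (-R) * R^j / 1 := by
          apply div_le_div_of_nonneg_left (by positivity) (by norm_num) hfact1
      _ = Real.exp (-R) * R^j := by ring
      _ ≤ Real.exp (-R) * R^(m-1) := mul_le_mul_of_nonneg_left hpow (Real.exp_pos _).le
  have hsum : ∑ j ∈ Finset.range m, poissonPMFReal ρ j ≤ (m:ℝ) * (Real.exp (-R) * R^(m-1)) := by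
    have := Finset.sum_le_card_nsmul (Finset.range m) _ _ hbound
    rwa [Finset.card_range, nsmul_eq_mul] at this
  have hstep : (m:ℝ) * (Real.exp (-R) * R^(m-1)) ≤ Real.exp (-R) * R^m := by
    have h1 : R^m = R^(m-1) * R := by
      rw [← pow_succ]
      congr 1
      omega
    rw [h1]
    have h2 : (m:ℝ) * (Real.exp (-R) * R^(m-1)) = Real.exp (-R) * R^(m-1) * (m:ℝ) := by ring
    rw [h2]
    calc Real.exp (-R) * R^(m-1) * (m:ℝ) ≤ Real.exp (-R) * R^(m-1) * R :=
          mul_le_mul_of_nonneg_left hmR (by positivity)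
      _ = Real.exp (-R) * (R^(m-1) * R) := by ring
  have hfin : Real.exp (-R) * R^m ≤ c0 := by
    have h1 : Real.exp (-R) * R^m = Real.exp ((m:ℝ) * Real.log R - R) := by
      rw [Real.exp_sub, Real.exp_nat_mul, Real.exp_log hR0, Real.exp_neg]
      ring
    rw [h1]
    have h2 : (m:ℝ) * Real.log R - R ≤ -R/2 := by linarith
    have h3 : -R/2 ≤ Real.log c0 := by
      have h4 : Real.log (1/c0) = - Real.log c0 := by rw [one_div, Real.log_inv]
      rw [h4] at hRc0
      linarith
    calc Real.exp ((m:ℝ) * Real.log R - R) ≤ Real.exp (Real.log c0) :=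
          Real.exp_le_exp.mpr (by linarith)
      _ = c0 := Real.exp_log hc0
  linarith

end KingmanAux

open MeasureTheory ProbabilityTheory

/-- The number of blocks of the Kingman coalescent at a fixed time `δ > 0`, started from
infinitely many blocks, is stochastically dominated by `1 + Poisson(ρ)` for a suitable
`ρ = ρ(δ)`.  Here `K` is the block count at time `δ`, characterized by
`#K > n ⟺ ∑_{k ≥ n} Υ_k > δ`, where the `Υ_k` are independent exponentials of rate
`k(k+1)/2` (the holding time with `k+1` blocks). -/
theorem kingman_blocks_poisson_domination
    {Ω : Type*} [MeasurableSpace Ω] (μ : Measure Ω) [IsProbabilityMeasure μ]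
    (Υ : ℕ → Ω → ℝ)
    (hmeas : ∀ n, Measurable (Υ n))
    (hindep : iIndepFun Υ μ)
    (hlaw : ∀ n : ℕ, 1 ≤ n →
      Measure.map (Υ n) μ = expMeasure ((n : ℝ) * (n + 1) / 2))
    (δ : ℝ) (hδ : 0 < δ)
    (K : Ω → ℕ) (hK : Measurable K)
    (hKchar : ∀ n : ℕ, {ω | n < K ω} = {ω | δ < ∑' k : ℕ, Υ (n + k) ω}) :
    ∃ ρ : NNReal, 0 < ρ ∧ ∀ n : ℕ, 1 ≤ n →
      μ {ω | n ≤ K ω} ≤ poissonMeasure ρ {m : ℕ | n ≤ 1 + m} := by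
  classical
  obtain ⟨c0, hc0pos, hc01, hlow⟩ := aux_lower μ Υ hmeas hindep hlaw δ hδ
  set Rr : ℝ := max (max 2 (164/δ)) (max ((8*Real.sqrt (12/δ))^4) (2*Real.log (1/c0)))
    with hRr
  have hR2 : (2:ℝ) ≤ Rr := le_max_of_le_left (le_max_left _ _)
  have hR164 : 164/δ ≤ Rr := le_max_of_le_left (le_max_right _ _)
  have hRu : (8*Real.sqrt (12/δ))^4 ≤ Rr := le_max_of_le_right (le_max_left _ _)
  have hRc0 : 2*Real.log (1/c0) ≤ Rr := le_max_of_le_right (le_max_right _ _)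
  have hRpos : (0:ℝ) < Rr := by linarith
  refine ⟨Rr.toNNReal, Real.toNNReal_pos.mpr hRpos, ?_⟩
  set ρ : ℝ≥0 := Rr.toNNReal with hρdef
  have hρR : (ρ:ℝ) = Rr := Real.coe_toNNReal _ hRpos.le
  intro n hn
  rcases eq_or_lt_of_le hn with h1 | h2
  · have hset : {m : ℕ | n ≤ 1 + m} = Set.univ := by
      ext x; simp only [Set.mem_setOf_eq, Set.mem_univ, iff_true]; omega
    rw [hset, measure_univ]
    exact prob_le_one
  set m := n - 1 with hm
  have hm1 : 1 ≤ m := by omega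
  have hnm : n = m + 1 := by omega
  -- the set where all relevant coordinates are nonnegative
  set G : Set Ω := ⋂ j : ℕ, {ω | 0 ≤ Υ (j+1) ω} with hG
  have hGmeas : MeasurableSet G :=
    MeasurableSet.iInter (fun j => measurableSet_le measurable_const (hmeas (j+1)))
  have hGone : μ G = 1 := by
    rw [← prob_compl_eq_zero_iff hGmeas]
    have hGc : Gᶜ = ⋃ j : ℕ, {ω | 0 ≤ Υ (j+1) ω}ᶜ := by rw [hG, Set.compl_iInter]
    rw [hGc]
    refine measure_iUnion_null (fun j => ?_)
    have hpre : {ω | 0 ≤ Υ (j+1) ω}ᶜ = Υ (j+1) ⁻¹' (Set.Iio 0) := by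
      ext ω; simp [not_le]
    rw [hpre, ← Measure.map_apply (hmeas (j+1)) measurableSet_Iio, hlaw (j+1) (by omega)]
    exact aux_expMeasure_Iio_zero
  have hGcnull : μ Gᶜ = 0 := (prob_compl_eq_zero_iff hGmeas).mpr hGone
  have hGnn : ∀ ω ∈ G, ∀ i : ℕ, 1 ≤ i → 0 ≤ Υ i ω := by
    intro ω hω i hi
    rw [hG, Set.mem_iInter] at hω
    have h3 := hω (i-1)
    simp only [Set.mem_setOf_eq] at h3
    rwa [show i - 1 + 1 = i from by omega] at h3
  set A : ℕ → Set Ω := fun N => {ω | δ ≤ ∑ k ∈ Finset.range N, Υ (m+k) ω} with hA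
  have hincl : {ω | δ < ∑' k : ℕ, Υ (m + k) ω} ∩ G ⊆ ⋃ N : ℕ, (A N ∩ G) := by
    rintro ω ⟨hδω, hωG⟩
    simp only [Set.mem_setOf_eq] at hδω
    have hsummable : Summable (fun k => Υ (m+k) ω) := by
      by_contra hns
      rw [tsum_eq_zero_of_not_summable hns] at hδω
      linarith
    have htendsto := hsummable.hasSum.tendsto_sum_nat
    have hev := htendsto.eventually (eventually_gt_nhds hδω)
    obtain ⟨N, hN⟩ := hev.exists
    exact Set.mem_iUnion.mpr ⟨N, ⟨le_of_lt hN, hωG⟩⟩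
  have hAmono : Monotone (fun N => A N ∩ G) := by
    apply monotone_nat_of_le_succ
    intro N ω hω
    obtain ⟨hω1, hωG⟩ := hω
    refine ⟨?_, hωG⟩
    simp only [hA, Set.mem_setOf_eq] at hω1 ⊢
    rw [Finset.sum_range_succ]
    have := hGnn ω hωG (m+N) (by omega)
    linarith
  have hμeq : μ {ω | n ≤ K ω} ≤ ⨆ N, μ (A N ∩ G) := by
    have hev1 : {ω | n ≤ K ω} = {ω | m < K ω} := by
      ext ω; simp only [Set.mem_setOf_eq]; omega
    rw [hev1, hKchar m]
    set S := {ω | δ < ∑' k : ℕ, Υ (m + k) ω} with hS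
    have h4 : μ S ≤ μ (S ∩ G) := by
      have h5 := measure_inter_add_diff S hGmeas (μ := μ)
      have h6 : μ (S \ G) = 0 :=
        measure_mono_null (Set.diff_subset_compl S G) hGcnull
      rw [h6, add_zero] at h5
      exact le_of_eq h5.symm
    refine le_trans h4 ?_
    refine le_trans (measure_mono hincl) ?_
    rw [hAmono.directed_le.measure_iUnion]
  have htails : {m' : ℕ | n ≤ 1 + m'} = {m' : ℕ | m ≤ m'} := by
    ext x; simp only [Set.mem_setOf_eq]; omega
  rw [htails]
  by_cases hcase : (m:ℝ)^2 ≤ (8/δ)*(Rr+1)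
  · -- regime A : use the uniform bound 1 - c0
    have hNbound : ∀ N, μ (A N ∩ G) ≤ 1 - ENNReal.ofReal c0 := by
      intro N
      have hsub : A N ∩ G ⊆ {ω | δ ≤ ∑ k ∈ Finset.range (m-1+N), Υ (1+k) ω} := by
        rintro ω ⟨hω, hωG⟩
        simp only [hA, Set.mem_setOf_eq] at hω ⊢
        have hre : ∑ k ∈ Finset.range N, Υ (m+k) ω
            = ∑ i ∈ Finset.Ico (m-1) (m-1+N), Υ (1+i) ω := by
          rw [Finset.sum_Ico_eq_sum_range, add_tsub_cancel_left]
          refine Finset.sum_congr rfl (fun k _ => ?_)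
          congr 1
          omega
        have hsubset : Finset.Ico (m-1) (m-1+N) ⊆ Finset.range (m-1+N) := by
          intro i hi
          simp only [Finset.mem_Ico] at hi
          simp only [Finset.mem_range]
          omega
        have h7 := Finset.sum_le_sum_of_subset_of_nonneg hsubset
          (fun i _ _ => hGnn ω hωG (1+i) (by omega))
        rw [hre] at hω
        linarith
      exact le_trans (measure_mono hsub) (hlow (m-1+N))
    refine le_trans hμeq (le_trans (iSup_le hNbound) ?_)
    rw [aux_pois_tail_eq ρ m]
    refine tsub_le_tsub_left (ENNReal.ofReal_le_ofReal ?_) 1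
    have h12 : 12/δ ≤ Rr := by
      have : 12/δ ≤ 164/δ := (div_le_div_iff_of_pos_right hδ).mpr (by norm_num)
      linarith
    exact aux_regimeA hδ hc0pos hR2 h12 hRu hRc0 m hm1 hcase ρ hρR
  · -- regime B : Chernoff bound against the Poisson point mass at m
    push_neg at hcase
    have hNbound : ∀ N, μ (A N ∩ G) ≤
        ENNReal.ofReal (Real.exp (3*((m:ℝ)+1)/2)
          * Real.exp (-((m:ℝ)*((m:ℝ)+1)/4) * δ)) := by
      intro N
      refine le_trans (measure_mono Set.inter_subset_left) ?_
      rw [ENNReal.le_ofReal_iff_toReal_le (measure_ne_top _ _) (by positivity)]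
      exact aux_chernoff μ Υ hmeas hindep hlaw δ m N hm1
    refine le_trans hμeq (le_trans (iSup_le hNbound) ?_)
    have hchain := aux_regimeB hδ hR164 m hm1 hcase
    refine le_trans (ENNReal.ofReal_le_ofReal hchain) ?_
    have hpmf : Real.exp (-Rr) * Rr^m / (Nat.factorial m) = poissonPMFReal ρ m := by
      rw [poissonPMFReal, hρR]
    rw [hpmf]
    exact aux_pois_tail_pmf ρ m
end

section
/- With $\Upsilon_k$ independent exponentials of rate $k(k+1)/2$, there exists $C<\infty$ such that for all sufficiently large $n$, $\mathbf{P}\{\sum_{k\geq n}\Upsilon_k>\delta\}\leq C\,e^{-\delta n(\log n)^2/2}$. In particular the tail of the block-counting variable of Kingman's coalescent at time $\delta$ decays faster than any Poisson tail. -/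
open MeasureTheory ProbabilityTheory


open Real Set
open scoped ENNReal NNReal


namespace KingmanAux

lemma expMeasure_eq (r : ℝ) :
    expMeasure r = volume.withDensity
      (fun x => ((exponentialPDFReal r x).toNNReal : ℝ≥0∞)) := rfl

lemma expMeasure_Iio_zero (r : ℝ) : expMeasure r (Iio 0) = 0 := by
  show (volume.withDensity (gammaPDF 1 r)) (Iio 0) = 0
  rw [withDensity_apply _ measurableSet_Iio, lintegral_gammaPDF_of_nonpos le_rfl]

lemma pdf_mul_exp_eq (r t : ℝ) :
    (fun x : ℝ => exponentialPDFReal r x * Real.exp (t * x)) =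
      (Ici (0:ℝ)).indicator (fun x => r * Real.exp (-(r - t) * x)) := by
  funext x
  by_cases hx : (0:ℝ) ≤ x
  · simp only [exponentialPDFReal, gammaPDFReal, if_pos hx, indicator_of_mem (mem_Ici.2 hx)]
    rw [Real.rpow_one, Real.Gamma_one, div_one, sub_self, Real.rpow_zero, mul_one,
      mul_assoc, ← Real.exp_add]
    ring_nf
  · simp only [exponentialPDFReal, gammaPDFReal, if_neg hx,
      indicator_of_notMem (fun h => hx (mem_Ici.1 h)), zero_mul]

lemma integrable_pdf_mul_exp {r t : ℝ} (htr : t < r) :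
    Integrable (fun x : ℝ => exponentialPDFReal r x * Real.exp (t * x)) := by
  rw [pdf_mul_exp_eq]
  refine IntegrableOn.integrable_indicator ?_ measurableSet_Ici
  rw [integrableOn_Ici_iff_integrableOn_Ioi]
  exact (exp_neg_integrableOn_Ioi 0 (by linarith)).const_mul r

lemma smul_pdf_eq {r : ℝ} (hr : 0 < r) (t : ℝ) :
    (fun x : ℝ => (exponentialPDFReal r x).toNNReal • Real.exp (t * x)) =
      fun x : ℝ => exponentialPDFReal r x * Real.exp (t * x) := by
  funext x
  rw [NNReal.smul_def, smul_eq_mul, Real.coe_toNNReal _ (exponentialPDFReal_nonneg hr x)]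

lemma integrable_exp_expMeasure {r t : ℝ} (hr : 0 < r) (htr : t < r) :
    Integrable (fun x : ℝ => Real.exp (t * x)) (expMeasure r) := by
  rw [expMeasure_eq, integrable_withDensity_iff_integrable_smul
    ((measurable_exponentialPDFReal r).real_toNNReal), smul_pdf_eq hr]
  exact integrable_pdf_mul_exp htr

lemma integral_exp_expMeasure {r t : ℝ} (hr : 0 < r) (htr : t < r) :
    ∫ x, Real.exp (t * x) ∂(expMeasure r) = r / (r - t) := by
  have hb : (0:ℝ) < r - t := by linarith
  rw [expMeasure_eq, integral_withDensity_eq_integral_smul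
    ((measurable_exponentialPDFReal r).real_toNNReal), smul_pdf_eq hr,
    pdf_mul_exp_eq, integral_indicator measurableSet_Ici,
    integral_Ici_eq_integral_Ioi, integral_const_mul]
  have h2 : ∫ x in Ioi (0:ℝ), Real.exp (-(r - t) * x) = (r - t)⁻¹ := by
    have := integral_comp_mul_left_Ioi (fun y : ℝ => Real.exp (-y)) 0 hb
    simp only [mul_zero, neg_mul] at this ⊢
    rw [this, integral_exp_neg_Ioi, neg_zero, Real.exp_zero, smul_eq_mul, mul_one]
  rw [h2, div_eq_mul_inv]

lemma log_sq_le {x : ℝ} (hx : 4096 ≤ x) : Real.log x ^ 2 ≤ x / 4 := by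
  have hx0 : (0:ℝ) < x := by linarith
  set q := x ^ (1/4 : ℝ) with hq
  have hq0 : 0 ≤ q := Real.rpow_nonneg hx0.le _
  have hqpos : 0 < q := Real.rpow_pos_of_pos hx0 _
  have hlog : Real.log x ≤ 4 * q := by
    have h1 : Real.log q = (1/4) * Real.log x := Real.log_rpow hx0 _
    have h2 : Real.log q ≤ q - 1 := Real.log_le_sub_one_of_pos hqpos
    linarith
  have hqq : q * q * (q * q) = x := by
    rw [hq, ← Real.rpow_add hx0, ← Real.rpow_add hx0]
    norm_num
  have hlx0 : 0 ≤ Real.log x := Real.log_nonneg (by linarith)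
  nlinarith [mul_self_le_mul_self hlx0 hlog, sq_nonneg (q*q - 64), sq_nonneg q]

end KingmanAux

open KingmanAux

/-- Superexponential tail bound: with `Υ_k` independent exponentials of rate `k(k+1)/2`,
there is a constant `C < ∞` such that for all sufficiently large `n`,
`P{∑_{k ≥ n} Υ_k > δ} ≤ C e^{-δ n (log n)² / 2}`. -/
theorem kingman_tail_superexponential
    {Ω : Type*} [MeasurableSpace Ω] (μ : Measure Ω) [IsProbabilityMeasure μ]
    (Υ : ℕ → Ω → ℝ)
    (hmeas : ∀ n, Measurable (Υ n))
    (hindep : iIndepFun Υ μ)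
    (hlaw : ∀ n : ℕ, 1 ≤ n →
      Measure.map (Υ n) μ = expMeasure ((n : ℝ) * (n + 1) / 2))
    (δ : ℝ) (hδ : 0 < δ) :
    ∃ C : ℝ, ∃ N : ℕ, ∀ n : ℕ, N ≤ n →
      μ {ω | δ < ∑' k : ℕ, Υ (n + k) ω} ≤
        ENNReal.ofReal (C * Real.exp (-δ * n * (Real.log n) ^ 2 / 2)) := by
  classical
  refine ⟨1, max 4096 ⌈(8:ℝ)/δ⌉₊, ?_⟩
  intro n hn
  have hn4096n : (4096:ℕ) ≤ n := le_trans (le_max_left _ _) hn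
  have hn4096 : (4096:ℝ) ≤ (n:ℝ) := by exact_mod_cast hn4096n
  have hn1 : 1 ≤ n := le_trans (by norm_num) hn4096n
  have hnpos : (0:ℝ) < n := by linarith
  have hδn : (8:ℝ) ≤ δ * n := by
    have h1 : (⌈(8:ℝ)/δ⌉₊ : ℝ) ≤ n := by
      exact_mod_cast le_trans (le_max_right (4096:ℕ) _) hn
    have h2 : (8:ℝ)/δ ≤ n := le_trans (Nat.le_ceil _) h1
    rw [div_le_iff₀ hδ] at h2
    linarith
  set L : ℝ := Real.log n ^ 2 with hLdef
  have hL0 : 0 ≤ L := sq_nonneg _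
  have hLn : L ≤ (n:ℝ)/4 := log_sq_le hn4096
  set θ : ℝ := n * L with hθdef
  have hθ0 : 0 ≤ θ := mul_nonneg hnpos.le hL0
  set r : ℕ → ℝ := fun k => (k:ℝ) * ((k:ℝ)+1) / 2 with hrdef
  have hkn : ∀ k : ℕ, n ≤ k → (n:ℝ) ≤ (k:ℝ) := fun k hk => by exact_mod_cast hk
  have hrpos : ∀ k : ℕ, n ≤ k → 0 < r k := by
    intro k hk
    have := hkn k hk
    simp only [hrdef]
    nlinarith
  have h2θ : ∀ k : ℕ, n ≤ k → 2*θ ≤ r k := by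
    intro k hk
    have hk' := hkn k hk
    simp only [hrdef, hθdef]
    nlinarith
  have hθltr : ∀ k : ℕ, n ≤ k → θ < r k := by
    intro k hk
    have := h2θ k hk
    have := hrpos k hk
    linarith
  have hmap : ∀ k : ℕ, n ≤ k → Measure.map (Υ k) μ = expMeasure (r k) := by
    intro k hk
    exact hlaw k (le_trans hn1 hk)
  -- integrability and mgf of each factor
  have hint : ∀ k : ℕ, n ≤ k → Integrable (fun ω => Real.exp (θ * Υ k ω)) μ := by
    intro k hk
    have h := integrable_exp_expMeasure (hrpos k hk) (hθltr k hk)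
    rw [← hmap k hk] at h
    have := (integrable_map_measure
      (Real.continuous_exp.comp (continuous_const.mul continuous_id)).aestronglyMeasurable
      (hmeas k).aemeasurable).1 h
    exact this
  have hmgf : ∀ k : ℕ, n ≤ k → mgf (Υ k) μ θ = r k / (r k - θ) := by
    intro k hk
    have h := integral_exp_expMeasure (hrpos k hk) (hθltr k hk)
    have hg : AEStronglyMeasurable (fun x : ℝ => Real.exp (θ * x)) (Measure.map (Υ k) μ) :=
      ((measurable_id.const_mul θ).exp).aestronglyMeasurable
    rw [← hmap k hk, integral_map (hmeas k).aemeasurable hg] at h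
    simp only [mgf]
    exact h
  -- per-factor bound
  have hfac : ∀ k : ℕ, n ≤ k →
      r k / (r k - θ) ≤ Real.exp (4*θ * (((k:ℝ))⁻¹ - ((k:ℝ)+1)⁻¹)) := by
    intro k hk
    have hrk := hrpos k hk
    have h2 := h2θ k hk
    have hlt := hθltr k hk
    have hkpos : (0:ℝ) < (k:ℝ) := lt_of_lt_of_le hnpos (hkn k hk)
    have hsub : (0:ℝ) < r k - θ := by linarith
    have h1 : r k / (r k - θ) = 1 + θ/(r k - θ) := by
      field_simp
      ring
    have hdiv : θ/(r k - θ) ≤ 2*θ/(r k) := by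
      rw [div_le_div_iff₀ hsub hrk]
      nlinarith
    have h3 : 2*θ/(r k) = 4*θ * (((k:ℝ))⁻¹ - ((k:ℝ)+1)⁻¹) := by
      simp only [hrdef]
      have hk1 : (0:ℝ) < (k:ℝ)+1 := by linarith
      field_simp
      ring
    calc r k / (r k - θ) = 1 + θ/(r k - θ) := h1
      _ ≤ 1 + 2*θ/(r k) := by linarith
      _ ≤ Real.exp (2*θ/(r k)) := by
          have := Real.add_one_le_exp (2*θ/(r k)); linarith
      _ = Real.exp (4*θ * (((k:ℝ))⁻¹ - ((k:ℝ)+1)⁻¹)) := by rw [h3]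
  -- Chernoff events
  set A : ℕ → Set Ω := fun m => {ω | δ ≤ ∑ k ∈ Finset.Ico n (n+m), Υ k ω} with hAdef
  have hAbound : ∀ m : ℕ, μ (A m) ≤ ENNReal.ofReal (Real.exp (-θ*δ + 4*L)) := by
    intro m
    have hmem : ∀ k ∈ Finset.Ico n (n+m), n ≤ k := fun k hk => (Finset.mem_Ico.1 hk).1
    have hint' : ∀ k ∈ Finset.Ico n (n+m), Integrable (fun ω => Real.exp (θ * Υ k ω)) μ :=
      fun k hk => hint k (hmem k hk)
    have hintsum := hindep.integrable_exp_mul_sum hmeas hint'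
    have hcher := measure_ge_le_exp_mul_mgf (μ := μ)
      (X := ∑ k ∈ Finset.Ico n (n+m), Υ k) δ hθ0 hintsum
    rw [hindep.mgf_sum hmeas] at hcher
    have hprod : ∏ k ∈ Finset.Ico n (n+m), mgf (Υ k) μ θ ≤ Real.exp (4*L) := by
      calc ∏ k ∈ Finset.Ico n (n+m), mgf (Υ k) μ θ
          ≤ ∏ k ∈ Finset.Ico n (n+m), Real.exp (4*θ * (((k:ℝ))⁻¹ - ((k:ℝ)+1)⁻¹)) := by
            refine Finset.prod_le_prod ?_ ?_
            · intro k hk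
              rw [hmgf k (hmem k hk)]
              have h1 := hrpos k (hmem k hk)
              have h2 := hθltr k (hmem k hk)
              exact div_nonneg h1.le (by linarith)
            · intro k hk
              rw [hmgf k (hmem k hk)]
              exact hfac k (hmem k hk)
        _ = Real.exp (∑ k ∈ Finset.Ico n (n+m), 4*θ * (((k:ℝ))⁻¹ - ((k:ℝ)+1)⁻¹)) :=
            (Real.exp_sum _ _).symm
        _ ≤ Real.exp (4*L) := by
            rw [Real.exp_le_exp]
            have htel : ∑ k ∈ Finset.Ico n (n+m), (((k:ℝ))⁻¹ - ((k:ℝ)+1)⁻¹)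
                = ((n:ℝ))⁻¹ - ((n+m:ℕ):ℝ)⁻¹ := by
              rw [Finset.sum_Ico_eq_sum_range]
              simp only [add_tsub_cancel_left]
              have := Finset.sum_range_sub' (fun i => (((n+i:ℕ):ℝ))⁻¹) m
              simp only [add_zero] at this
              rw [← this]
              refine Finset.sum_congr rfl ?_
              intro i _
              push_cast
              ring_nf
            rw [← Finset.mul_sum, htel]
            have hnm : (0:ℝ) ≤ ((n+m:ℕ):ℝ)⁻¹ := by positivity
            have h4 : 4*θ*((n:ℝ))⁻¹ = 4*L := by
              rw [hθdef]; field_simp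
            nlinarith [mul_nonneg (mul_nonneg (by norm_num : (0:ℝ) ≤ 4) hθ0) hnm]
    have hA' : A m = {ω | δ ≤ (∑ k ∈ Finset.Ico n (n+m), Υ k) ω} := by
      simp only [hAdef, Finset.sum_apply]
    have htoReal : (μ (A m)).toReal ≤ Real.exp (-θ*δ + 4*L) := by
      rw [hA']
      calc (μ {ω | δ ≤ (∑ k ∈ Finset.Ico n (n+m), Υ k) ω}).toReal
          ≤ Real.exp (-θ*δ) * ∏ k ∈ Finset.Ico n (n+m), mgf (Υ k) μ θ := hcher
        _ ≤ Real.exp (-θ*δ) * Real.exp (4*L) :=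
            mul_le_mul_of_nonneg_left hprod (Real.exp_nonneg _)
        _ = Real.exp (-θ*δ + 4*L) := (Real.exp_add _ _).symm
    calc μ (A m) = ENNReal.ofReal (μ (A m)).toReal :=
          (ENNReal.ofReal_toReal (measure_ne_top μ _)).symm
      _ ≤ ENNReal.ofReal (Real.exp (-θ*δ + 4*L)) := ENNReal.ofReal_le_ofReal htoReal
  -- a.e. nonnegativity
  have hnonneg : ∀ᵐ ω ∂μ, ∀ k : ℕ, 0 ≤ Υ (n + k) ω := by
    rw [MeasureTheory.ae_all_iff]
    intro k
    have hk : n ≤ n + k := Nat.le_add_right _ _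
    have hzero : μ {ω | Υ (n+k) ω < 0} = 0 := by
      have hpre : {ω | Υ (n+k) ω < 0} = Υ (n+k) ⁻¹' (Iio 0) := rfl
      rw [hpre, ← Measure.map_apply (hmeas _) measurableSet_Iio, hmap _ hk,
        expMeasure_Iio_zero]
    rw [ae_iff]
    have hset : {a | ¬ 0 ≤ Υ (n+k) a} = {ω | Υ (n+k) ω < 0} := by
      ext ω; simp [not_le]
    rw [hset]
    exact hzero
  -- monotone envelope
  set D : ℕ → Set Ω := fun m => ⋂ j, ⋂ (_ : m ≤ j), A j with hDdef
  have hDmono : Monotone D := by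
    intro a b hab ω hω
    simp only [hDdef, mem_iInter] at hω ⊢
    exact fun j hj => hω j (le_trans hab hj)
  have hDsubA : ∀ m, D m ⊆ A m := by
    intro m ω hω
    simp only [hDdef, mem_iInter] at hω
    exact hω m le_rfl
  have hsub : {ω | δ < ∑' k : ℕ, Υ (n + k) ω} ≤ᵐ[μ] ⋃ m, D m := by
    filter_upwards [hnonneg] with ω hω hE
    replace hE : δ < ∑' k : ℕ, Υ (n + k) ω := hE
    by_cases hs : Summable (fun k => Υ (n+k) ω)
    · have htend := hs.hasSum.tendsto_sum_nat
      have hev : ∀ᶠ m in Filter.atTop, δ < ∑ i ∈ Finset.range m, Υ (n+i) ω :=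
        htend.eventually (eventually_gt_nhds hE)
      obtain ⟨m0, hm0⟩ := Filter.eventually_atTop.1 hev
      refine mem_iUnion.2 ⟨m0, ?_⟩
      simp only [hDdef, mem_iInter]
      intro j hj
      show δ ≤ ∑ k ∈ Finset.Ico n (n+j), Υ k ω
      rw [Finset.sum_Ico_eq_sum_range]
      simp only [add_tsub_cancel_left]
      exact (hm0 j hj).le
    · exfalso
      rw [tsum_eq_zero_of_not_summable hs] at hE
      linarith
  calc μ {ω | δ < ∑' k : ℕ, Υ (n + k) ω}
      ≤ μ (⋃ m, D m) := measure_mono_ae hsub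
    _ = ⨆ m, μ (D m) := hDmono.measure_iUnion
    _ ≤ ENNReal.ofReal (Real.exp (-θ*δ + 4*L)) :=
        iSup_le fun m => le_trans (measure_mono (hDsubA m)) (hAbound m)
    _ ≤ ENNReal.ofReal (1 * Real.exp (-δ * n * (Real.log n) ^ 2 / 2)) := by
        refine ENNReal.ofReal_le_ofReal ?_
        rw [one_mul, Real.exp_le_exp]
        rw [hθdef, hLdef]
        nlinarith [hL0, hδn, hnpos]
end

section
/- Under the assumptions of the Liggett–Spitzer supermartingale (kernel $a$, measure $\alpha$ with $\sum_y a(x,y)\alpha(\{y\})\leq\Gamma\alpha(\{x\})$, independent walks with $\eta_0=\sum_i\delta_{X_0^i}\in\mathcal{E}_\alpha$ a.s.), for every $t\geq 0$ the configuration $\eta_t=\sum_{i\in\mathcal{I}}\delta_{X_t^i}$ satisfies $\mathbf{P}\{\eta_t\in\mathcal{E}_\alpha\}=1$; in particular $\eta_t$ is locally finite almost surely. -/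
open MeasureTheory ProbabilityTheory NNReal
open scoped ENNReal

/-- `n`-step transition weights of the discrete kernel `a` on `ℤ²`. -/
noncomputable def aIter (a : (ℤ × ℤ) → (ℤ × ℤ) → ℝ) : ℕ → (ℤ × ℤ) → (ℤ × ℤ) → ℝ
  | 0 => fun x y => if x = y then 1 else 0
  | (n + 1) => fun x y => ∑' z : ℤ × ℤ, a x z * aIter a n z y

/-- Transition probabilities of the rate-1 continuous-time random walk with jump kernel `a`. -/
noncomputable def transP (a : (ℤ × ℤ) → (ℤ × ℤ) → ℝ) (t : ℝ) (x y : ℤ × ℤ) : ℝ :=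
  ∑' n : ℕ, Real.exp (-t) * t ^ n / (Nat.factorial n) * aIter a n x y

lemma aIter_bounds (a : (ℤ × ℤ) → (ℤ × ℤ) → ℝ) (ha_nonneg : ∀ x y, 0 ≤ a x y)
    (ha_sum : ∀ x, Summable (a x)) (ha_prob : ∀ x, ∑' y : ℤ × ℤ, a x y = 1) :
    ∀ n x y, 0 ≤ aIter a n x y ∧ aIter a n x y ≤ 1 := by
  intro n
  induction n with
  | zero =>
    intro x y
    dsimp [aIter]
    split <;> norm_num
  | succ n ih =>
    intro x y
    have hsumz : Summable (fun z => a x z * aIter a n z y) :=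
      Summable.of_nonneg_of_le (fun z => mul_nonneg (ha_nonneg x z) (ih z y).1)
        (fun z => by simpa using mul_le_mul_of_nonneg_left (ih z y).2 (ha_nonneg x z))
        (ha_sum x)
    constructor
    · exact tsum_nonneg fun z => mul_nonneg (ha_nonneg x z) (ih z y).1
    · calc aIter a (n+1) x y = ∑' z : ℤ × ℤ, a x z * aIter a n z y := rfl
        _ ≤ ∑' z : ℤ × ℤ, a x z :=
          Summable.tsum_le_tsum
            (fun z => by simpa using mul_le_mul_of_nonneg_left (ih z y).2 (ha_nonneg x z))
            hsumz (ha_sum x)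
        _ = 1 := ha_prob x

lemma aIter_alpha_bound
    (a : (ℤ × ℤ) → (ℤ × ℤ) → ℝ) (ha_nonneg : ∀ x y, 0 ≤ a x y)
    (ha_sum : ∀ x, Summable (a x)) (ha_prob : ∀ x, ∑' y : ℤ × ℤ, a x y = 1)
    (α : (ℤ × ℤ) → ℝ) (hα0 : ∀ x, 0 ≤ α x) (hα_sum : Summable α)
    (Γ : ℝ) (hΓ0 : 0 ≤ Γ) (hΓ : ∀ x, ∑' y : ℤ × ℤ, a x y * α y ≤ Γ * α x) :
    ∀ n x, ∑' y : ℤ × ℤ, ENNReal.ofReal (aIter a n x y) * ENNReal.ofReal (α y)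
      ≤ ENNReal.ofReal Γ ^ n * ENNReal.ofReal (α x) := by
  have hbasic := aIter_bounds a ha_nonneg ha_sum ha_prob
  have hαsum' : ∀ x, Summable (fun z => a x z * α z) := fun x =>
    Summable.of_nonneg_of_le (fun z => mul_nonneg (ha_nonneg x z) (hα0 z))
      (fun z => mul_le_mul_of_nonneg_left (Summable.le_tsum hα_sum z fun _ _ => hα0 _) (ha_nonneg x z))
      ((ha_sum x).mul_right _)
  have hkey : ∀ x, ∑' z : ℤ × ℤ, ENNReal.ofReal (a x z) * ENNReal.ofReal (α z)
      ≤ ENNReal.ofReal Γ * ENNReal.ofReal (α x) := by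
    intro x
    rw [← ENNReal.ofReal_mul hΓ0]
    calc ∑' z : ℤ × ℤ, ENNReal.ofReal (a x z) * ENNReal.ofReal (α z)
        = ∑' z : ℤ × ℤ, ENNReal.ofReal (a x z * α z) :=
          tsum_congr fun z => (ENNReal.ofReal_mul (ha_nonneg x z)).symm
      _ = ENNReal.ofReal (∑' z : ℤ × ℤ, a x z * α z) :=
          (ENNReal.ofReal_tsum_of_nonneg
            (fun z => mul_nonneg (ha_nonneg x z) (hα0 z)) (hαsum' x)).symm
      _ ≤ _ := ENNReal.ofReal_le_ofReal (hΓ x)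
  intro n
  induction n with
  | zero =>
    intro x
    have hterm : ∀ y : ℤ × ℤ, ENNReal.ofReal (aIter a 0 x y) * ENNReal.ofReal (α y)
        = if y = x then ENNReal.ofReal (α x) else 0 := by
      intro y
      by_cases h : x = y
      · subst h; simp [aIter]
      · simp [aIter, h, Ne.symm h]
    rw [tsum_congr hterm, tsum_ite_eq]
    simp
  | succ n ih =>
    intro x
    have hsumz : ∀ y, Summable (fun z => a x z * aIter a n z y) := fun y =>
      Summable.of_nonneg_of_le (fun z => mul_nonneg (ha_nonneg x z) (hbasic n z y).1)
        (fun z => by simpa using mul_le_mul_of_nonneg_left (hbasic n z y).2 (ha_nonneg x z))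
        (ha_sum x)
    have hrec : ∀ y, ENNReal.ofReal (aIter a (n+1) x y)
        = ∑' z : ℤ × ℤ, ENNReal.ofReal (a x z) * ENNReal.ofReal (aIter a n z y) := by
      intro y
      rw [show aIter a (n+1) x y = ∑' z : ℤ × ℤ, a x z * aIter a n z y from rfl,
        ENNReal.ofReal_tsum_of_nonneg
          (fun z => mul_nonneg (ha_nonneg x z) (hbasic n z y).1) (hsumz y)]
      exact tsum_congr fun z => ENNReal.ofReal_mul (ha_nonneg x z)
    calc ∑' y : ℤ × ℤ, ENNReal.ofReal (aIter a (n+1) x y) * ENNReal.ofReal (α y)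
        = ∑' y : ℤ × ℤ, ∑' z : ℤ × ℤ,
            ENNReal.ofReal (a x z) * ENNReal.ofReal (aIter a n z y) * ENNReal.ofReal (α y) := by
          refine tsum_congr fun y => ?_
          rw [hrec y, ENNReal.tsum_mul_right]
      _ = ∑' z : ℤ × ℤ, ∑' y : ℤ × ℤ,
            ENNReal.ofReal (a x z) * ENNReal.ofReal (aIter a n z y) * ENNReal.ofReal (α y) :=
          ENNReal.tsum_comm
      _ = ∑' z : ℤ × ℤ, ENNReal.ofReal (a x z) *
            ∑' y : ℤ × ℤ, ENNReal.ofReal (aIter a n z y) * ENNReal.ofReal (α y) := by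
          refine tsum_congr fun z => ?_
          rw [← ENNReal.tsum_mul_left]
          exact tsum_congr fun y => mul_assoc _ _ _
      _ ≤ ∑' z : ℤ × ℤ, ENNReal.ofReal (a x z) *
            (ENNReal.ofReal Γ ^ n * ENNReal.ofReal (α z)) :=
          ENNReal.tsum_le_tsum fun z => mul_le_mul_right (ih z) _
      _ = ENNReal.ofReal Γ ^ n *
            ∑' z : ℤ × ℤ, ENNReal.ofReal (a x z) * ENNReal.ofReal (α z) := by
          rw [← ENNReal.tsum_mul_left]
          exact tsum_congr fun z => by ring
      _ ≤ ENNReal.ofReal Γ ^ n * (ENNReal.ofReal Γ * ENNReal.ofReal (α x)) :=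
          mul_le_mul_right (hkey x) _
      _ = ENNReal.ofReal Γ ^ (n+1) * ENNReal.ofReal (α x) := by ring

lemma transP_alpha_bound
    (a : (ℤ × ℤ) → (ℤ × ℤ) → ℝ) (ha_nonneg : ∀ x y, 0 ≤ a x y)
    (ha_sum : ∀ x, Summable (a x)) (ha_prob : ∀ x, ∑' y : ℤ × ℤ, a x y = 1)
    (α : (ℤ × ℤ) → ℝ) (hα0 : ∀ x, 0 ≤ α x) (hα_sum : Summable α)
    (Γ : ℝ) (hΓ0 : 0 ≤ Γ) (hΓ : ∀ x, ∑' y : ℤ × ℤ, a x y * α y ≤ Γ * α x)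
    (t : ℝ) (ht : 0 ≤ t) :
    ∀ x, 0 ≤ (∑' y : ℤ × ℤ, transP a t x y * α y) ∧
      ∑' y : ℤ × ℤ, transP a t x y * α y
        ≤ (Real.exp (-t) * ∑' n : ℕ, (t * Γ) ^ n / (Nat.factorial n)) * α x := by
  have hbasic := aIter_bounds a ha_nonneg ha_sum ha_prob
  set c : ℕ → ℝ := fun n => Real.exp (-t) * t ^ n / (Nat.factorial n) with hc_def
  have hc0 : ∀ n, 0 ≤ c n := fun n =>
    div_nonneg (mul_nonneg (Real.exp_pos _).le (pow_nonneg ht n)) (Nat.cast_nonneg _)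
  have hc_sum : Summable c := by
    have h := (Real.summable_pow_div_factorial t).mul_left (Real.exp (-t))
    exact h.congr fun n => by simp [hc_def, mul_div_assoc]
  have htrans_nonneg : ∀ x y, 0 ≤ transP a t x y := fun x y =>
    tsum_nonneg fun n => mul_nonneg (hc0 n) (hbasic n x y).1
  have hsum_n : ∀ x y, Summable (fun n => c n * aIter a n x y) := fun x y =>
    Summable.of_nonneg_of_le (fun n => mul_nonneg (hc0 n) (hbasic n x y).1)
      (fun n => by simpa using mul_le_mul_of_nonneg_left (hbasic n x y).2 (hc0 n))
      hc_sum
  have hofReal_trans : ∀ x y, ENNReal.ofReal (transP a t x y)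
      = ∑' n : ℕ, ENNReal.ofReal (c n) * ENNReal.ofReal (aIter a n x y) := by
    intro x y
    rw [show transP a t x y = ∑' n : ℕ, c n * aIter a n x y from rfl,
      ENNReal.ofReal_tsum_of_nonneg
        (fun n => mul_nonneg (hc0 n) (hbasic n x y).1) (hsum_n x y)]
    exact tsum_congr fun n => ENNReal.ofReal_mul (hc0 n)
  have hGfun : (fun n : ℕ => c n * Γ ^ n)
      = fun n : ℕ => Real.exp (-t) * ((t * Γ) ^ n / (Nat.factorial n)) := by
    funext n
    simp only [hc_def, mul_pow]
    ring
  have hGsum : Summable (fun n : ℕ => c n * Γ ^ n) := by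
    rw [hGfun]
    exact (Real.summable_pow_div_factorial (t * Γ)).mul_left _
  have hGval : ∑' n : ℕ, c n * Γ ^ n
      = Real.exp (-t) * ∑' n : ℕ, (t * Γ) ^ n / (Nat.factorial n) := by
    rw [hGfun]
    exact tsum_mul_left
  have hS0 : 0 ≤ Real.exp (-t) * ∑' n : ℕ, (t * Γ) ^ n / (Nat.factorial n) :=
    mul_nonneg (Real.exp_pos _).le
      (tsum_nonneg fun n => div_nonneg (pow_nonneg (mul_nonneg ht hΓ0) n) (Nat.cast_nonneg _))
  have hENN : ∀ x, ∑' y : ℤ × ℤ, ENNReal.ofReal (transP a t x y) * ENNReal.ofReal (α y)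
      ≤ ENNReal.ofReal ((Real.exp (-t) * ∑' n : ℕ, (t * Γ) ^ n / (Nat.factorial n)) * α x) := by
    intro x
    calc ∑' y : ℤ × ℤ, ENNReal.ofReal (transP a t x y) * ENNReal.ofReal (α y)
        = ∑' y : ℤ × ℤ, ∑' n : ℕ,
            ENNReal.ofReal (c n) * ENNReal.ofReal (aIter a n x y) * ENNReal.ofReal (α y) := by
          refine tsum_congr fun y => ?_
          rw [hofReal_trans x y, ENNReal.tsum_mul_right]
      _ = ∑' n : ℕ, ∑' y : ℤ × ℤ,
            ENNReal.ofReal (c n) * ENNReal.ofReal (aIter a n x y) * ENNReal.ofReal (α y) :=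
          ENNReal.tsum_comm
      _ = ∑' n : ℕ, ENNReal.ofReal (c n) *
            ∑' y : ℤ × ℤ, ENNReal.ofReal (aIter a n x y) * ENNReal.ofReal (α y) := by
          refine tsum_congr fun n => ?_
          rw [← ENNReal.tsum_mul_left]
          exact tsum_congr fun y => mul_assoc _ _ _
      _ ≤ ∑' n : ℕ, ENNReal.ofReal (c n) * (ENNReal.ofReal Γ ^ n * ENNReal.ofReal (α x)) :=
          ENNReal.tsum_le_tsum fun n => mul_le_mul_right
            (aIter_alpha_bound a ha_nonneg ha_sum ha_prob α hα0 hα_sum Γ hΓ0 hΓ n x) _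
      _ = (∑' n : ℕ, ENNReal.ofReal (c n) * ENNReal.ofReal Γ ^ n) * ENNReal.ofReal (α x) := by
          rw [← ENNReal.tsum_mul_right]
          exact tsum_congr fun n => (mul_assoc _ _ _).symm
      _ = ENNReal.ofReal (∑' n : ℕ, c n * Γ ^ n) * ENNReal.ofReal (α x) := by
          rw [ENNReal.ofReal_tsum_of_nonneg
            (fun n => mul_nonneg (hc0 n) (pow_nonneg hΓ0 n)) hGsum]
          congr 1
          exact tsum_congr fun n => by rw [ENNReal.ofReal_mul (hc0 n), ENNReal.ofReal_pow hΓ0]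
      _ = ENNReal.ofReal ((Real.exp (-t) * ∑' n : ℕ, (t * Γ) ^ n / (Nat.factorial n)) * α x) := by
          rw [hGval, ← ENNReal.ofReal_mul hS0]
  intro x
  have hterm0 : ∀ y, 0 ≤ transP a t x y * α y := fun y =>
    mul_nonneg (htrans_nonneg x y) (hα0 y)
  refine ⟨tsum_nonneg hterm0, ?_⟩
  have hRHS0 : 0 ≤ (Real.exp (-t) * ∑' n : ℕ, (t * Γ) ^ n / (Nat.factorial n)) * α x :=
    mul_nonneg hS0 (hα0 x)
  by_cases hs : Summable fun y : ℤ × ℤ => transP a t x y * α y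
  · have h1 : ENNReal.ofReal (∑' y : ℤ × ℤ, transP a t x y * α y)
        = ∑' y : ℤ × ℤ, ENNReal.ofReal (transP a t x y) * ENNReal.ofReal (α y) := by
      rw [ENNReal.ofReal_tsum_of_nonneg hterm0 hs]
      exact tsum_congr fun y => ENNReal.ofReal_mul (htrans_nonneg x y)
    exact (ENNReal.ofReal_le_ofReal_iff hRHS0).mp (h1 ▸ hENN x)
  · rw [tsum_eq_zero_of_not_summable hs]
    exact hRHS0

/-- Under the Liggett–Spitzer conditions, if the initial configuration
`η₀ = ∑_i δ_{X^i_0}` lies in the Liggett–Spitzer space `ℰ_α` almost surely, then for every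
`t ≥ 0` the configuration `η_t` lies in `ℰ_α` a.s.; in particular it is locally finite a.s. -/
theorem liggett_spitzer_state_space
    {Ω : Type*} {m0 : MeasurableSpace Ω} (μ : Measure Ω) [IsProbabilityMeasure μ]
    {ι : Type*} [Countable ι]
    (a : (ℤ × ℤ) → (ℤ × ℤ) → ℝ)
    (ha_nonneg : ∀ x y, 0 ≤ a x y)
    (ha_prob : ∀ x, ∑' y : ℤ × ℤ, a x y = 1)
    (ha_shift : ∀ x y, a x y = a 0 (y - x))
    (ha_irred : ∀ x y, ∃ n : ℕ, 0 < aIter a n x y)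
    (α : (ℤ × ℤ) → ℝ) (hα_pos : ∀ x, 0 < α x) (hα_sum : Summable α)
    (Γ : ℝ) (hΓ : ∀ x, ∑' y : ℤ × ℤ, a x y * α y ≤ Γ * α x)
    (ℱ : Filtration ℝ≥0 m0)
    (X : ι → ℝ≥0 → Ω → ℤ × ℤ)
    (hadapted : ∀ i t, Measurable[ℱ t] (X i t))
    (hindep : iIndepFun
      (fun i ω => (fun t : ℝ≥0 => X i t ω)) μ)
    (hmarkov : ∀ i, ∀ s t : ℝ≥0, s ≤ t →
      μ[(fun ω => α (X i t ω))|ℱ s] =ᵐ[μ]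
        fun ω => ∑' y : ℤ × ℤ, transP a ((t : ℝ) - (s : ℝ)) (X i s ω) y * α y)
    (hinit : ∀ᵐ ω ∂μ, Summable fun i => α (X i 0 ω)) :
    ∀ t : ℝ≥0, ∀ᵐ ω ∂μ,
      (Summable fun i => α (X i t ω)) ∧ ∀ x : ℤ × ℤ, {i : ι | X i t ω = x}.Finite := by
  intro t
  have hα0 : ∀ x, 0 ≤ α x := fun x => (hα_pos x).le
  have ha_sum : ∀ x, Summable (a x) := by
    intro x
    by_contra h
    have h1 := ha_prob x
    rw [tsum_eq_zero_of_not_summable h] at h1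
    norm_num at h1
  have hΓ0 : 0 ≤ Γ := by
    have h1 : (0:ℝ) ≤ ∑' y : ℤ × ℤ, a 0 y * α y :=
      tsum_nonneg fun y => mul_nonneg (ha_nonneg 0 y) (hα0 y)
    nlinarith [hΓ (0 : ℤ × ℤ), hα_pos (0 : ℤ × ℤ)]
  have hmeasα : Measurable α := measurable_of_countable α
  have hXmeas : ∀ i (s : ℝ≥0), Measurable (fun ω => α (X i s ω)) := fun i s =>
    hmeasα.comp ((hadapted i s).mono (ℱ.le s) le_rfl)
  have hint : ∀ i (s : ℝ≥0), Integrable (fun ω => α (X i s ω)) μ := fun i s =>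
    Integrable.mono' (integrable_const (∑' x, α x)) (hXmeas i s).aestronglyMeasurable
      (ae_of_all _ fun ω => by
        rw [Real.norm_eq_abs, abs_of_nonneg (hα0 _)]
        exact Summable.le_tsum hα_sum _ fun _ _ => hα0 _)
  set C : ℝ := Real.exp (-(t:ℝ)) * ∑' n : ℕ, ((t:ℝ) * Γ) ^ n / (Nat.factorial n) with hC_def
  have hC0 : 0 ≤ C :=
    mul_nonneg (Real.exp_pos _).le
      (tsum_nonneg fun n => div_nonneg (pow_nonneg (mul_nonneg t.coe_nonneg hΓ0) n)
        (Nat.cast_nonneg _))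
  have hbound := transP_alpha_bound a ha_nonneg ha_sum ha_prob α hα0 hα_sum Γ hΓ0 hΓ
    (t : ℝ) t.coe_nonneg
  set g : ι → Ω → ℝ := fun i ω => ∑' y : ℤ × ℤ, transP a (t : ℝ) (X i 0 ω) y * α y with hg_def
  have hg : ∀ i, μ[(fun ω => α (X i t ω))|ℱ 0] =ᵐ[μ] g i := by
    intro i
    have h := hmarkov i 0 t zero_le
    simpa using h
  have hg_int : ∀ i, Integrable (g i) μ := fun i => integrable_condExp.congr (hg i)
  have hg_le : ∀ i ω, g i ω ≤ C * α (X i 0 ω) := fun i ω => (hbound (X i 0 ω)).2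
  set h0 : Ω → ℝ≥0∞ := fun ω => ∑' i, ENNReal.ofReal (α (X i 0 ω)) with hh0_def
  have h0_meas0 : Measurable[ℱ 0] h0 :=
    Measurable.ennreal_tsum fun i =>
      Measurable.ennreal_ofReal (hmeasα.comp (hadapted i 0))
  set B : ℕ → Set Ω := fun M => {ω | h0 ω ≤ (M : ℝ≥0∞)} with hB_def
  have hB0 : ∀ M, MeasurableSet[ℱ 0] (B M) := fun M =>
    measurableSet_le h0_meas0 measurable_const
  have hB : ∀ M, MeasurableSet (B M) := fun M => (ℱ.le 0) _ (hB0 M)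
  have hsum0 : ∀ (M : ℕ) (F : Finset ι) ω, ω ∈ B M → ∑ i ∈ F, α (X i 0 ω) ≤ (M : ℝ) := by
    intro M F ω hω
    have h1 : ENNReal.ofReal (∑ i ∈ F, α (X i 0 ω))
        = ∑ i ∈ F, ENNReal.ofReal (α (X i 0 ω)) :=
      ENNReal.ofReal_sum_of_nonneg fun i _ => hα0 _
    have h2 : (∑ i ∈ F, ENNReal.ofReal (α (X i 0 ω))) ≤ (M : ℝ≥0∞) :=
      le_trans (ENNReal.sum_le_tsum F) hω
    rw [← ENNReal.ofReal_natCast M] at h2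
    exact (ENNReal.ofReal_le_ofReal_iff (Nat.cast_nonneg M)).mp (h1 ▸ h2)
  have hint_setB : ∀ (M : ℕ) i, ∫ ω in B M, α (X i t ω) ∂μ ≤ ∫ ω in B M, C * α (X i 0 ω) ∂μ := by
    intro M i
    rw [← setIntegral_condExp (ℱ.le 0) (hint i t) (hB0 M)]
    have heq : ∫ ω in B M, (μ[(fun ω => α (X i t ω))|ℱ 0]) ω ∂μ = ∫ ω in B M, g i ω ∂μ :=
      integral_congr_ae (ae_restrict_of_ae (hg i))
    rw [heq]
    exact integral_mono ((hg_int i).restrict) (((hint i 0).const_mul C).restrict)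
      (fun ω => hg_le i ω)
  have hFsum : ∀ (M : ℕ) (F : Finset ι),
      ∑ i ∈ F, ∫ ω in B M, α (X i t ω) ∂μ ≤ C * M := by
    intro M F
    have hμB : (μ (B M)).toReal ≤ 1 := by
      have := ENNReal.toReal_mono ENNReal.one_ne_top (prob_le_one (μ := μ) (s := B M))
      simpa using this
    calc ∑ i ∈ F, ∫ ω in B M, α (X i t ω) ∂μ
        ≤ ∑ i ∈ F, ∫ ω in B M, C * α (X i 0 ω) ∂μ :=
          Finset.sum_le_sum fun i _ => hint_setB M i
      _ = ∫ ω in B M, ∑ i ∈ F, C * α (X i 0 ω) ∂μ :=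
          (integral_finset_sum F fun i _ => ((hint i 0).const_mul C).restrict).symm
      _ ≤ ∫ ω in B M, C * (M : ℝ) ∂μ := by
          refine setIntegral_mono_on
            ((integrable_finset_sum F fun i _ => (hint i 0).const_mul C).restrict)
            (integrable_const _).restrict (hB M) (fun ω hω => ?_)
          rw [← Finset.mul_sum]
          exact mul_le_mul_of_nonneg_left (hsum0 M F ω hω) hC0
      _ = (μ (B M)).toReal * (C * M) := by
          rw [setIntegral_const, smul_eq_mul]
          rfl
      _ ≤ C * M := by
          nlinarith [mul_nonneg hC0 (Nat.cast_nonneg (α := ℝ) M), ENNReal.toReal_nonneg (a := μ (B M))]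
  have hlintB : ∀ M : ℕ,
      ∫⁻ ω in B M, (∑' i, ENNReal.ofReal (α (X i t ω))) ∂μ ≤ ENNReal.ofReal (C * M) := by
    intro M
    rw [lintegral_tsum (fun i => ((hXmeas i t).ennreal_ofReal).aemeasurable)]
    have heq : ∀ i, ∫⁻ ω in B M, ENNReal.ofReal (α (X i t ω)) ∂μ
        = ENNReal.ofReal (∫ ω in B M, α (X i t ω) ∂μ) := fun i =>
      (ofReal_integral_eq_lintegral_ofReal ((hint i t).restrict)
        (ae_of_all _ fun ω => hα0 _)).symm
    rw [tsum_congr heq, ENNReal.tsum_eq_iSup_sum]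
    refine iSup_le fun F => ?_
    calc ∑ i ∈ F, ENNReal.ofReal (∫ ω in B M, α (X i t ω) ∂μ)
        = ENNReal.ofReal (∑ i ∈ F, ∫ ω in B M, α (X i t ω) ∂μ) :=
          (ENNReal.ofReal_sum_of_nonneg fun i _ =>
            integral_nonneg fun ω => hα0 _).symm
      _ ≤ ENNReal.ofReal (C * M) := ENNReal.ofReal_le_ofReal (hFsum M F)
  have hae1 : ∀ M : ℕ, ∀ᵐ ω ∂μ, ω ∈ B M → Summable fun i => α (X i t ω) := by
    intro M
    have hmeas : Measurable fun ω => ∑' i, ENNReal.ofReal (α (X i t ω)) :=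
      Measurable.ennreal_tsum fun i => (hXmeas i t).ennreal_ofReal
    have hlt : ∀ᵐ ω ∂(μ.restrict (B M)), (∑' i, ENNReal.ofReal (α (X i t ω))) < ⊤ :=
      ae_lt_top hmeas (lt_of_le_of_lt (hlintB M) ENNReal.ofReal_lt_top).ne
    rw [ae_restrict_iff' (hB M)] at hlt
    filter_upwards [hlt] with ω hω hmem
    have hsum := ENNReal.summable_toReal (hω hmem).ne
    exact hsum.congr fun i => ENNReal.toReal_ofReal (hα0 _)
  have hae2 : ∀ᵐ ω ∂μ, ∃ M : ℕ, ω ∈ B M := by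
    filter_upwards [hinit] with ω hω
    have hne : h0 ω ≠ ⊤ := by
      rw [show h0 ω = ENNReal.ofReal (∑' i, α (X i 0 ω)) from
        (ENNReal.ofReal_tsum_of_nonneg (fun i => hα0 _) hω).symm]
      exact ENNReal.ofReal_ne_top
    obtain ⟨M, hM⟩ := ENNReal.exists_nat_gt hne
    exact ⟨M, hM.le⟩
  have h_all : ∀ᵐ ω ∂μ, ∀ M : ℕ, ω ∈ B M → Summable fun i => α (X i t ω) :=
    (ae_all_iff).2 hae1
  filter_upwards [h_all, hae2] with ω h1 h2
  obtain ⟨M, hM⟩ := h2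
  have hsummable := h1 M hM
  refine ⟨hsummable, fun x => ?_⟩
  have hev : ∀ᶠ i in Filter.cofinite, α (X i t ω) < α x :=
    Filter.Tendsto.eventually_lt_const (hα_pos x) hsummable.tendsto_cofinite_zero
  rw [Filter.eventually_cofinite] at hev
  refine hev.subset fun i hi => ?_
  simp only [Set.mem_setOf_eq] at hi ⊢
  rw [hi]
  exact lt_irrefl _
end

section
/- Let $C$ be a partition with $\#C=n$ blocks, all located in a box of diameter at most $D$, and suppose each pair of blocks coalesces within time $s$ with probability at least $H=H^\gamma_s$. Then the expected number of blocks after time $s$ satisfies $\mathbf{E}[\#C_s]\leq n-(n-1)H$. -/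
open MeasureTheory

/-- One-box coalescence estimate: a random partition of `n` blocks is encoded by a random
retraction `c ω : Fin n → Fin n` mapping each element to the minimal element of its block
(`c` is idempotent and `c i ≤ i`), so that the number of blocks is the cardinality of the
image of `c ω`.  If each pair of blocks has merged by time `s` with probability at least
`H`, then the expected number of blocks satisfies `E[#C_s] ≤ n - (n-1) H`. -/
theorem expected_block_number_bound
    {Ω : Type*} [MeasurableSpace Ω] (μ : Measure Ω) [IsProbabilityMeasure μ]
    (n : ℕ) (hn : 1 ≤ n)
    (c : Ω → Fin n → Fin n) (hc_meas : Measurable c)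
    (hc_idem : ∀ ω i, c ω (c ω i) = c ω i)
    (hc_min : ∀ ω i, c ω i ≤ i)
    (H : ℝ)
    (hH : ∀ i j : Fin n, i ≠ j → ENNReal.ofReal H ≤ μ {ω | c ω i = c ω j}) :
    ∫ ω, ((Finset.univ.image (c ω)).card : ℝ) ∂μ ≤ (n : ℝ) - ((n : ℝ) - 1) * H := by
  haveI : NeZero n := ⟨by omega⟩
  have heval : ∀ i : Fin n, Measurable fun ω => c ω i :=
    fun i => (measurable_pi_apply i).comp hc_meas
  have hmeas : ∀ i : Fin n, MeasurableSet {ω | c ω i = i} := fun i => by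
    have : {ω | c ω i = i} = (fun ω => c ω i) ⁻¹' {i} := rfl
    rw [this]
    exact (heval i) (measurableSet_singleton i)
  -- pointwise: number of blocks = number of fixed points
  have hcard : ∀ ω, ((Finset.univ.image (c ω)).card : ℝ)
      = ∑ i : Fin n, Set.indicator {ω' | c ω' i = i} (fun _ => (1:ℝ)) ω := by
    intro ω
    have himg : Finset.univ.image (c ω) = Finset.univ.filter (fun i => c ω i = i) := by
      ext j
      simp only [Finset.mem_image, Finset.mem_filter, Finset.mem_univ, true_and]
      constructor
      · rintro ⟨i, rfl⟩; exact hc_idem ω i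
      · intro h; exact ⟨j, h⟩
    rw [himg, Finset.card_filter]
    push_cast
    refine Finset.sum_congr rfl fun i _ => ?_
    simp [Set.indicator_apply]
  have hinteg : ∀ i : Fin n,
      Integrable (fun ω => Set.indicator {ω' | c ω' i = i} (fun _ => (1:ℝ)) ω) μ :=
    fun i => (integrable_const 1).indicator (hmeas i)
  have hint : ∀ i : Fin n, ∫ ω, Set.indicator {ω' | c ω' i = i} (fun _ => (1:ℝ)) ω ∂μ
      = (μ {ω' | c ω' i = i}).toReal := by
    intro i
    rw [integral_indicator_const _ (hmeas i)]
    simp [Measure.real]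
  have hle1 : ∀ i : Fin n, (μ {ω' | c ω' i = i}).toReal ≤ 1 := by
    intro i
    have := prob_le_one (μ := μ) (s := {ω' | c ω' i = i})
    have := ENNReal.toReal_mono ENNReal.one_ne_top this
    simpa using this
  have hbound : ∀ i : Fin n, i ≠ 0 → (μ {ω' | c ω' i = i}).toReal ≤ 1 - H := by
    intro i hi
    rcases le_or_gt H 0 with h0 | h0
    · have := hle1 i; linarith
    · have hTmeas : MeasurableSet {ω' | c ω' i = c ω' 0} :=
        measurableSet_eq_fun (heval i) (heval 0)
      have hdisj : Disjoint {ω' | c ω' i = i} {ω' | c ω' i = c ω' 0} := by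
        rw [Set.disjoint_left]
        intro ω h1 h2
        have h0f : c ω 0 = 0 := le_antisymm (hc_min ω 0) (Fin.zero_le _)
        apply hi
        simp only [Set.mem_setOf_eq] at h1 h2
        rw [← h1, h2, h0f]
      have hadd : μ {ω' | c ω' i = i} + ENNReal.ofReal H ≤ 1 := by
        calc μ {ω' | c ω' i = i} + ENNReal.ofReal H
            ≤ μ {ω' | c ω' i = i} + μ {ω' | c ω' i = c ω' 0} :=
              add_le_add_right (hH i 0 hi) _
          _ = μ ({ω' | c ω' i = i} ∪ {ω' | c ω' i = c ω' 0}) :=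
              (measure_union hdisj hTmeas).symm
          _ ≤ 1 := prob_le_one
      have hfin : μ {ω' | c ω' i = i} ≠ ⊤ := measure_ne_top μ _
      have h2 := ENNReal.toReal_mono ENNReal.one_ne_top hadd
      rw [ENNReal.toReal_add hfin ENNReal.ofReal_ne_top,
        ENNReal.toReal_ofReal h0.le, ENNReal.toReal_one] at h2
      linarith
  calc ∫ ω, ((Finset.univ.image (c ω)).card : ℝ) ∂μ
      = ∑ i : Fin n, (μ {ω' | c ω' i = i}).toReal := by
        simp_rw [hcard]
        rw [integral_finset_sum _ (fun i _ => hinteg i)]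
        exact Finset.sum_congr rfl fun i _ => hint i
    _ = (μ {ω' | c ω' (0:Fin n) = 0}).toReal
        + ∑ i ∈ Finset.univ.erase (0:Fin n), (μ {ω' | c ω' i = i}).toReal :=
          (Finset.add_sum_erase _ _ (Finset.mem_univ 0)).symm
    _ ≤ 1 + ((n:ℝ) - 1) * (1 - H) := by
        have hs : ∑ i ∈ Finset.univ.erase (0:Fin n), (μ {ω' | c ω' i = i}).toReal
            ≤ (Finset.univ.erase (0:Fin n)).card • (1 - H) := by
          refine Finset.sum_le_card_nsmul _ _ _ ?_
          intro i hi
          exact hbound i (Finset.ne_of_mem_erase hi)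
        have hcardE : (Finset.univ.erase (0:Fin n)).card = n - 1 := by
          rw [Finset.card_erase_of_mem (Finset.mem_univ 0), Finset.card_univ, Fintype.card_fin]
        rw [hcardE] at hs
        have hns : ((n - 1 : ℕ) : ℝ) = (n : ℝ) - 1 := by
          push_cast [Nat.cast_sub hn]; ring
        rw [nsmul_eq_mul, hns] at hs
        have := hle1 0
        linarith
    _ = (n : ℝ) - ((n : ℝ) - 1) * H := by ring
end
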